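/- arXiv:2304.13771 — 6 statements merged into one kernel-verified Lean document; each statement's English description precedes it below -/
import Mathlib

section
/- For a self-adjoint operator $T$ on $\mathbb{C}^d$ and $k\in[d]$, the sum of the $k$ largest eigenvalues of $T$ equals the maximum of $\operatorname{tr}(TP)$ over all rank-$k$ orthogonal projectors $P$. -/
open Matrix

lemma fanAux_ineq {d : ℕ} (lam c : Fin d → ℝ) (t : Finset (Fin d)) (htne : t.Nonempty)
    (hc0 : ∀ i, 0 ≤ c i) (hc1 : ∀ i, c i ≤ 1)
    (hsum : ∑ i, c i = t.card)
    (hdom : ∀ i ∈ t, ∀ j ∉ t, lam j ≤ lam i) :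
    ∑ i, lam i * c i ≤ ∑ i ∈ t, lam i := by
  obtain ⟨i0, hi0, hmin⟩ := t.exists_min_image lam htne
  set m := lam i0 with hm
  have hcompl : ∑ i ∈ tᶜ, c i = t.card - ∑ i ∈ t, c i := by
    have := Finset.sum_add_sum_compl t c
    linarith [this.symm ▸ hsum]
  calc ∑ i, lam i * c i
      = ∑ i ∈ t, lam i * c i + ∑ i ∈ tᶜ, lam i * c i :=
        (Finset.sum_add_sum_compl t _).symm
    _ ≤ ∑ i ∈ t, lam i * c i + ∑ i ∈ tᶜ, m * c i := by
        gcongr with j hj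
        · exact hc0 j
        · exact hdom i0 hi0 j (by simpa using hj)
    _ = ∑ i ∈ t, lam i * c i + m * (t.card - ∑ i ∈ t, c i) := by
        rw [← Finset.mul_sum, hcompl]
    _ = ∑ i ∈ t, lam i * c i + ∑ i ∈ t, m * (1 - c i) := by
        congr 1
        rw [mul_sub, Finset.mul_sum]
        simp [mul_one_sub, Finset.sum_sub_distrib, Finset.sum_const, nsmul_eq_mul, mul_comm]
    _ ≤ ∑ i ∈ t, lam i * c i + ∑ i ∈ t, lam i * (1 - c i) := by
        gcongr with j hj
        · linarith [hc1 j]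
        · exact hmin j hj
    _ = ∑ i ∈ t, lam i := by
        rw [← Finset.sum_add_distrib]
        apply Finset.sum_congr rfl
        intro i _
        ring


lemma fanAux_cancel {n : Type*} [Fintype n] [DecidableEq n] {V : Matrix n n ℂ}
    (h : star V * V = 1) (X : Matrix n n ℂ) : star V * (V * X) = X := by
  rw [← Matrix.mul_assoc, h, Matrix.one_mul]

lemma fanAux_trace_rank {n : Type*} [Fintype n] [DecidableEq n] {Q : Matrix n n ℂ}
    (hQ : Q.IsHermitian) (hidem : Q * Q = Q) : Q.trace = (Q.rank : ℂ) := by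
  set V := (hQ.eigenvectorUnitary : Matrix n n ℂ) with hVdef
  set μ := hQ.eigenvalues with hμdef
  set D := diagonal ((RCLike.ofReal : ℝ → ℂ) ∘ μ) with hDdef
  have hV2 : star V * V = 1 := (Matrix.mem_unitaryGroup_iff').mp hQ.eigenvectorUnitary.2
  have hspec : Q = V * D * star V := hQ.spectral_theorem
  have hDD : D * D = D := by
    have h : V * (D * D) * star V = V * D * star V := by
      have e1 : (V * D * star V) * (V * D * star V) = V * (D * D) * star V := by
        simp only [Matrix.mul_assoc]
        rw [fanAux_cancel hV2]
      rw [← e1, ← hspec, hidem, hspec]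
    have h2 := congrArg (fun M => star V * M * V) h
    simp only [Matrix.mul_assoc, hV2, Matrix.mul_one, fanAux_cancel hV2] at h2
    exact h2
  have hmu : ∀ i, μ i * μ i = μ i := by
    intro i
    rw [hDdef, diagonal_mul_diagonal] at hDD
    have := congrFun (diagonal_injective hDD) i
    simp only [Function.comp_apply, Pi.mul_apply] at this
    exact_mod_cast this
  have htr : Q.trace = ∑ i, (μ i : ℂ) := by
    conv_lhs => rw [hspec]
    rw [Matrix.trace_mul_cycle, hV2, Matrix.one_mul, hDdef, Matrix.trace_diagonal]
    rfl
  rw [htr, hQ.rank_eq_card_non_zero_eigs]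
  rw [Fintype.card_subtype]
  rw [← Finset.sum_boole]
  apply Finset.sum_congr rfl
  intro i _
  have h01 : μ i = 0 ∨ μ i = 1 := by
    have := hmu i
    rcases eq_or_ne (μ i) 0 with h | h
    · exact Or.inl h
    · exact Or.inr (by field_simp at this; nlinarith [hmu i])
  rcases h01 with h | h <;> simp [← hμdef, h]

lemma fanAux_diag {n : Type*} [Fintype n] [DecidableEq n] {Q : Matrix n n ℂ}
    (hQ : Q.IsHermitian) (hidem : Q * Q = Q) (i : n) :
    Q i i = ((∑ j, Complex.normSq (Q i j) : ℝ) : ℂ) := by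
  conv_lhs => rw [← hidem]
  rw [Matrix.mul_apply, Complex.ofReal_sum]
  apply Finset.sum_congr rfl
  intro j _
  have hji : Q j i = star (Q i j) := by
    conv_lhs => rw [← hQ]
    rfl
  rw [hji, ← Complex.mul_conj]
  rfl

lemma fanAux_diag_mem {n : Type*} [Fintype n] [DecidableEq n] {Q : Matrix n n ℂ}
    (hQ : Q.IsHermitian) (hidem : Q * Q = Q) (i : n) :
    0 ≤ ∑ j, Complex.normSq (Q i j) ∧ ∑ j, Complex.normSq (Q i j) ≤ 1 := by
  set c := ∑ j, Complex.normSq (Q i j) with hc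
  have h0 : 0 ≤ c := Finset.sum_nonneg fun j _ => Complex.normSq_nonneg _
  have hself : Complex.normSq (Q i i) ≤ c :=
    Finset.single_le_sum (fun j _ => Complex.normSq_nonneg _) (Finset.mem_univ i)
  have hQii : Q i i = (c : ℂ) := fanAux_diag hQ hidem i
  rw [hQii, Complex.normSq_ofReal] at hself
  exact ⟨h0, by nlinarith⟩


/-- Fan's maximum principle: the sum of the `k` largest eigenvalues of a Hermitian `T`
is the greatest value of `tr(T P)` over rank-`k` orthogonal projectors `P`. -/
theorem stmt1 {d : ℕ} (T : Matrix (Fin d) (Fin d) ℂ) (hT : T.IsHermitian)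
    (k : ℕ) (hk1 : 1 ≤ k) (hk : k ≤ d)
    (t : Finset (Fin d)) (ht : t.card = k)
    (htop : ∀ i ∈ t, ∀ j ∉ t, hT.eigenvalues j ≤ hT.eigenvalues i) :
    IsGreatest {x : ℝ | ∃ P : Matrix (Fin d) (Fin d) ℂ,
        P.IsHermitian ∧ P * P = P ∧ P.rank = k ∧ (T * P).trace = (x : ℂ)}
      (∑ i ∈ t, hT.eigenvalues i) := by
  set U := (hT.eigenvectorUnitary : Matrix (Fin d) (Fin d) ℂ) with hUdef
  set lam := hT.eigenvalues with hlamdef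
  set D := diagonal ((RCLike.ofReal : ℝ → ℂ) ∘ lam) with hDdef
  have hU1 : U * star U = 1 := (Matrix.mem_unitaryGroup_iff).mp hT.eigenvectorUnitary.2
  have hU2 : star U * U = 1 := (Matrix.mem_unitaryGroup_iff').mp hT.eigenvectorUnitary.2
  have hspec : T = U * D * star U := hT.spectral_theorem
  have hdetU : IsUnit U.det := by
    apply IsUnit.of_mul_eq_one (star U).det
    rw [← Matrix.det_mul, hU1, Matrix.det_one]
  have hdetsU : IsUnit (star U).det := by
    apply IsUnit.of_mul_eq_one U.det
    rw [← Matrix.det_mul, hU2, Matrix.det_one]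
  constructor
  · -- membership
    set E := (diagonal (fun i => if i ∈ t then (1:ℂ) else 0) : Matrix (Fin d) (Fin d) ℂ) with hEdef
    refine ⟨U * E * star U, ?_, ?_, ?_, ?_⟩
    · -- Hermitian
      have hEH : E.IsHermitian := by
        rw [hEdef]
        apply isHermitian_diagonal_of_self_adjoint
        funext i
        simp only [Pi.star_apply]
        split <;> simp
      rw [star_eq_conjTranspose]
      exact isHermitian_mul_mul_conjTranspose U hEH
    · -- idempotent
      have hEE : E * E = E := by
        rw [hEdef, diagonal_mul_diagonal]
        exact congrArg diagonal (funext fun i => by split <;> simp)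
      calc (U * E * star U) * (U * E * star U) = U * (E * (star U * (U * (E * star U)))) := by
            simp only [Matrix.mul_assoc]
        _ = U * E * star U := by
            rw [fanAux_cancel hU2, ← Matrix.mul_assoc E E (star U), hEE, Matrix.mul_assoc]
    · -- rank
      rw [rank_mul_eq_left_of_isUnit_det _ _ hdetsU,
        rank_mul_eq_right_of_isUnit_det _ _ hdetU, hEdef, Matrix.rank_diagonal,
        Fintype.card_subtype, ← ht]
      congr 1
      ext i
      simp
    · -- trace
      have : T * (U * E * star U) = U * (D * E) * star U := by
        rw [hspec]
        simp only [Matrix.mul_assoc]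
        rw [fanAux_cancel hU2]
      rw [this, Matrix.trace_mul_cycle, hU2, Matrix.one_mul, hDdef, hEdef, diagonal_mul_diagonal,
        Matrix.trace_diagonal]
      simp only [Function.comp_apply, mul_ite, mul_one, mul_zero]
      rw [Finset.sum_ite_mem, Finset.univ_inter]
      push_cast
      rfl
  · -- upper bound
    rintro x ⟨P, hPH, hPP, hPrank, htr⟩
    set Q := star U * P * U with hQdef
    have hQH : Q.IsHermitian := by
      show Qᴴ = Q
      rw [hQdef, conjTranspose_mul, conjTranspose_mul, hPH]
      simp only [star_eq_conjTranspose, conjTranspose_conjTranspose, Matrix.mul_assoc]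
    have hQQ : Q * Q = Q := by
      rw [hQdef]
      simp only [Matrix.mul_assoc]
      rw [show U * (star U * (P * U)) = P * U from by rw [← Matrix.mul_assoc, hU1, Matrix.one_mul],
        ← Matrix.mul_assoc P P U, hPP]
    have hQrank : Q.rank = k := by
      rw [hQdef, rank_mul_eq_left_of_isUnit_det _ _ hdetU,
        rank_mul_eq_right_of_isUnit_det _ _ hdetsU, hPrank]
    set c := fun i => ∑ j, Complex.normSq (Q i j) with hcdef
    have hdiag : ∀ i, Q i i = (c i : ℂ) := fun i => fanAux_diag hQH hQQ i
    have hc0 : ∀ i, 0 ≤ c i := fun i => (fanAux_diag_mem hQH hQQ i).1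
    have hc1 : ∀ i, c i ≤ 1 := fun i => (fanAux_diag_mem hQH hQQ i).2
    have hsum : ∑ i, c i = (t.card : ℝ) := by
      have h1 : Q.trace = ((∑ i, c i : ℝ) : ℂ) := by
        rw [Matrix.trace]
        push_cast
        exact Finset.sum_congr rfl fun i _ => hdiag i
      have h2 : Q.trace = (k : ℂ) := by rw [fanAux_trace_rank hQH hQQ, hQrank]
      rw [h2] at h1
      rw [ht]
      exact_mod_cast h1.symm
    have hx : x = ∑ i, lam i * c i := by
      have h1 : (T * P).trace = (D * Q).trace := by
        have e : T * P = U * (D * (star U * P)) := by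
          rw [hspec]; simp only [Matrix.mul_assoc]
        rw [e, Matrix.trace_mul_comm, hQdef]
        congr 1
        simp only [Matrix.mul_assoc]
      have h2 : (D * Q).trace = ((∑ i, lam i * c i : ℝ) : ℂ) := by
        rw [Matrix.trace, Complex.ofReal_sum]
        apply Finset.sum_congr rfl
        intro i _
        rw [Matrix.diag_apply, Matrix.diagonal_mul, hdiag i]
        show (Complex.ofReal (lam i)) * (Complex.ofReal (c i)) = Complex.ofReal (lam i * c i)
        exact (Complex.ofReal_mul _ _).symm
      rw [htr] at h1
      rw [← h1] at h2
      exact_mod_cast h2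
    rw [hx]
    exact fanAux_ineq lam c t (Finset.card_pos.mp (ht ▸ hk1)) hc0 hc1 hsum htop
end

section
/- Let $A,B$ be self-adjoint operators on a finite-dimensional Hilbert space $\mathcal{H}$ and $C$ a self-adjoint operator on $\mathcal{K}$. If $\lambda(A) \succeq \lambda(B)$, then $\lambda(C\otimes A) \succeq \lambda(C\otimes B)$. -/
open Matrix Kronecker

/-- `Maj x y` : the real vector `x` majorizes `y`. -/
def Maj {ι : Type*} [Fintype ι] (x y : ι → ℝ) : Prop :=
  (∀ s : Finset ι, ∃ t : Finset ι, t.card = s.card ∧ ∑ i ∈ s, y i ≤ ∑ i ∈ t, x i) ∧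
    ∑ i, x i = ∑ i, y i

lemma maj_smul_nonneg {ι : Type*} [Fintype ι] {x y : ι → ℝ} {c : ℝ} (hc : 0 ≤ c)
    (h : Maj x y) : Maj (fun i => c * x i) (fun i => c * y i) := by
  refine ⟨fun s => ?_, by rw [← Finset.mul_sum, ← Finset.mul_sum, h.2]⟩
  obtain ⟨t, ht, hsum⟩ := h.1 s
  refine ⟨t, ht, ?_⟩
  rw [← Finset.mul_sum, ← Finset.mul_sum]
  exact mul_le_mul_of_nonneg_left hsum hc

lemma maj_smul_nonpos {ι : Type*} [Fintype ι] [DecidableEq ι] {x y : ι → ℝ} {c : ℝ} (hc : c ≤ 0)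
    (h : Maj x y) : Maj (fun i => c * x i) (fun i => c * y i) := by
  refine ⟨fun s => ?_, by rw [← Finset.mul_sum, ← Finset.mul_sum, h.2]⟩
  obtain ⟨t, ht, hsum⟩ := h.1 sᶜ
  refine ⟨tᶜ, ?_, ?_⟩
  · rw [Finset.card_compl, ht, Finset.card_compl]
    have := Finset.card_le_univ s
    omega
  · rw [← Finset.mul_sum, ← Finset.mul_sum]
    have h1 : ∑ i ∈ s, y i = ∑ i, y i - ∑ i ∈ sᶜ, y i := by
      rw [← Finset.sum_add_sum_compl s y]; ring
    have h2 : ∑ i ∈ tᶜ, x i = ∑ i, x i - ∑ i ∈ t, x i := by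
      rw [← Finset.sum_add_sum_compl t x]; ring
    rw [h1, h2, ← h.2]
    nlinarith [hsum]

lemma maj_prod {κ ι : Type*} [Fintype κ] [Fintype ι] [DecidableEq κ] [DecidableEq ι]
    {X Y : κ → ι → ℝ} (h : ∀ k, Maj (X k) (Y k)) :
    Maj (fun p : κ × ι => X p.1 p.2) (fun p : κ × ι => Y p.1 p.2) := by
  constructor
  · intro s
    -- fibers of s over κ
    choose t ht hsum using fun k => (h k).1 ((s.filter (fun p => p.1 = k)).image Prod.snd)
    have hinj : ∀ k : κ, Set.InjOn (Prod.snd : κ × ι → ι) (s.filter (fun p => p.1 = k) : Set (κ × ι)) := by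
      intro k p hp q hq hpq
      simp only [Finset.coe_filter, Set.mem_setOf_eq] at hp hq
      exact Prod.ext (hp.2.trans hq.2.symm) hpq
    refine ⟨Finset.univ.biUnion (fun k => (t k).image (Prod.mk k)), ?_, ?_⟩
    · rw [Finset.card_biUnion]
      · rw [Finset.card_eq_sum_card_fiberwise (f := Prod.fst) (t := Finset.univ)
          (fun x _ => Finset.mem_univ _)]
        refine Finset.sum_congr rfl fun k _ => ?_
        rw [Finset.card_image_of_injective _ (Prod.mk_right_injective k)]
        rw [ht k, Finset.card_image_of_injOn (hinj k)]
      · intro a _ b _ hab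
        simp only [Finset.disjoint_left, Finset.mem_image]
        rintro p ⟨i, _, rfl⟩ ⟨j, _, hj⟩
        exact hab (congrArg Prod.fst hj).symm
    · rw [← Finset.sum_fiberwise_of_maps_to
        (fun (x : κ × ι) (_ : x ∈ s) => Finset.mem_univ x.1) (fun p : κ × ι => Y p.1 p.2)]
      rw [Finset.sum_biUnion]
      · refine Finset.sum_le_sum fun k _ => ?_
        have e1 : ∑ p ∈ s.filter (fun p => p.1 = k), Y p.1 p.2
            = ∑ i ∈ (s.filter (fun p => p.1 = k)).image Prod.snd, Y k i := by
          rw [Finset.sum_image (fun p hp q hq => hinj k hp hq)]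
          refine Finset.sum_congr rfl fun p hp => ?_
          rw [(Finset.mem_filter.mp hp).2]
        have e2 : ∑ p ∈ (t k).image (Prod.mk k), X p.1 p.2 = ∑ i ∈ t k, X k i := by
          rw [Finset.sum_image (fun p _ q _ hpq => (Prod.mk_right_injective k) hpq)]
        rw [e1, e2]
        exact hsum k
      · intro a _ b hb hab
        simp only [Finset.disjoint_left, Finset.mem_image]
        rintro p ⟨i, _, rfl⟩ ⟨j, _, hj⟩
        exact hab (congrArg Prod.fst hj).symm
  · rw [Fintype.sum_prod_type, Fintype.sum_prod_type]
    exact Finset.sum_congr rfl fun k _ => (h k).2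

lemma exists_le_map {α β : Type*} [DecidableEq α] [DecidableEq β] :
    ∀ (Z : Multiset β) (S : Multiset α) (f : α → β), Z ≤ S.map f → ∃ T ≤ S, T.map f = Z := by
  intro Z
  induction Z using Multiset.induction with
  | empty => exact fun S f _ => ⟨0, Multiset.zero_le S, rfl⟩
  | cons a Z ih =>
    intro S f hZ
    have ha : a ∈ S.map f := Multiset.mem_of_le hZ (Multiset.mem_cons_self a Z)
    obtain ⟨i, hi, rfl⟩ := Multiset.mem_map.mp ha
    have hZ' : Z ≤ (S.erase i).map f := by
      have h1 : Z ≤ (S.map f).erase (f i) := by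
        simpa using Multiset.erase_le_erase (f i) hZ
      have h2 : (S.map f).erase (f i) = (S.erase i).map f := by
        conv_lhs => rw [← Multiset.cons_erase hi]
        rw [Multiset.map_cons, Multiset.erase_cons_head]
      rwa [h2] at h1
    obtain ⟨T, hT, hTm⟩ := ih (S.erase i) f hZ'
    refine ⟨i ::ₘ T, ?_, by rw [Multiset.map_cons, hTm]⟩
    calc i ::ₘ T ≤ i ::ₘ S.erase i := Multiset.cons_le_cons i hT
    _ = S := Multiset.cons_erase hi

lemma finset_sum_eq (s : Finset α) (f : α → ℝ) : ∑ i ∈ s, f i = (s.val.map f).sum := rfl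

lemma maj_congr {ι : Type*} [Fintype ι] [DecidableEq ι] {x y x' y' : ι → ℝ}
    (hx : Finset.univ.val.map x = Finset.univ.val.map x')
    (hy : Finset.univ.val.map y = Finset.univ.val.map y')
    (h : Maj x y) : Maj x' y' := by
  constructor
  · intro s'
    obtain ⟨T, hT, hTm⟩ := exists_le_map (s'.val.map y') Finset.univ.val y
      (hy ▸ Multiset.map_le_map (Finset.val_le_iff.mpr s'.subset_univ))
    set s : Finset ι := ⟨T, Multiset.nodup_of_le hT Finset.univ.nodup⟩ with hs
    obtain ⟨t, htc, hsum⟩ := h.1 s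
    obtain ⟨T', hT', hTm'⟩ := exists_le_map (t.val.map x) Finset.univ.val x'
      (hx ▸ Multiset.map_le_map (Finset.val_le_iff.mpr t.subset_univ))
    set t' : Finset ι := ⟨T', Multiset.nodup_of_le hT' Finset.univ.nodup⟩ with hts
    refine ⟨t', ?_, ?_⟩
    · have c1 : t'.card = t.card := by
        have h0 := congrArg Multiset.card hTm'
        rw [Multiset.card_map, Multiset.card_map] at h0
        rw [hts, Finset.card_mk]
        exact h0
      have c2 : s.card = s'.card := by
        have h0 := congrArg Multiset.card hTm
        rw [Multiset.card_map, Multiset.card_map] at h0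
        rw [hs, Finset.card_mk]
        exact h0
      omega
    · have e1 : ∑ i ∈ s', y' i = ∑ i ∈ s, y i := by
        rw [finset_sum_eq, finset_sum_eq, hs]
        exact congrArg Multiset.sum hTm.symm
      have e2 : ∑ i ∈ t', x' i = ∑ i ∈ t, x i := by
        rw [finset_sum_eq, finset_sum_eq, hts]
        exact congrArg Multiset.sum hTm'
      rw [e1, e2]; exact hsum
  · have ex : ∑ i, x i = ∑ i, x' i := by
      rw [finset_sum_eq, finset_sum_eq, hx]
    have ey : ∑ i, y i = ∑ i, y' i := by
      rw [finset_sum_eq, finset_sum_eq, hy]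
    rw [← ex, ← ey]; exact h.2

open Matrix Kronecker Polynomial

lemma charpoly_mul_conj {n : Type*} [Fintype n] [DecidableEq n] (U D V : Matrix n n ℂ)
    (h1 : U * V = 1) : (U * D * V).charpoly = D.charpoly := by
  have key : charmatrix (U * D * V) =
      U.map Polynomial.C * charmatrix D * V.map Polynomial.C := by
    rw [charmatrix, charmatrix]
    simp only [RingHom.mapMatrix_apply]
    rw [Matrix.mul_sub, Matrix.sub_mul]
    congr 1
    · rw [Matrix.mul_assoc,
        (Matrix.scalar_commute (X : ℂ[X]) (fun r => Commute.all _ _) (V.map Polynomial.C)).eq,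
        ← Matrix.mul_assoc, ← Matrix.map_mul, h1,
        Matrix.map_one _ (map_zero _) (map_one _), Matrix.one_mul]
    · rw [← Matrix.map_mul, ← Matrix.map_mul]
  rw [Matrix.charpoly, Matrix.charpoly, key, Matrix.det_mul, Matrix.det_mul]
  have : (U.map Polynomial.C).det * (V.map Polynomial.C).det = 1 := by
    rw [← Matrix.det_mul, ← Matrix.map_mul, h1, Matrix.map_one _ (map_zero _) (map_one _),
      Matrix.det_one]
  calc (U.map Polynomial.C).det * (charmatrix D).det * (V.map Polynomial.C).det
      = (U.map Polynomial.C).det * (V.map Polynomial.C).det * (charmatrix D).det := by ring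
    _ = (charmatrix D).det := by rw [this, one_mul]

lemma charpoly_diag {n : Type*} [Fintype n] [DecidableEq n] (d : n → ℂ) :
    (Matrix.diagonal d).charpoly = ∏ i, (X - Polynomial.C (d i)) := by
  have : charmatrix (Matrix.diagonal d) = Matrix.diagonal (fun i => X - Polynomial.C (d i)) := by
    rw [charmatrix]
    simp only [RingHom.mapMatrix_apply]
    rw [Matrix.scalar_apply, Matrix.diagonal_map (map_zero _), ← Matrix.diagonal_sub]
  rw [Matrix.charpoly, this, Matrix.det_diagonal]

lemma herm_charpoly {n : Type*} [Fintype n] [DecidableEq n] {M : Matrix n n ℂ}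
    (hM : M.IsHermitian) :
    M.charpoly = ∏ i, (X - Polynomial.C ((hM.eigenvalues i : ℂ))) := by
  conv_lhs => rw [hM.spectral_theorem, Unitary.conjStarAlgAut_apply]
  rw [charpoly_mul_conj _ _ _ ((Matrix.mem_unitaryGroup_iff).mp (hM.eigenvectorUnitary).2),
    charpoly_diag]
  rfl

lemma roots_prod_fn {ι : Type*} [Fintype ι] (f : ι → ℂ) :
    (∏ i, (X - Polynomial.C (f i))).roots = Finset.univ.val.map f := by
  have h := Polynomial.roots_multiset_prod_X_sub_C (Finset.univ.val.map f)
  rwa [Multiset.map_map, ← Finset.prod_eq_multiset_prod] at h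

lemma eig_kron {dK dH : ℕ} (C : Matrix (Fin dK) (Fin dK) ℂ) (A : Matrix (Fin dH) (Fin dH) ℂ)
    (hC : C.IsHermitian) (hA : A.IsHermitian) (hCA : (C ⊗ₖ A).IsHermitian) :
    Finset.univ.val.map hCA.eigenvalues =
      Finset.univ.val.map
        (fun p : Fin dK × Fin dH => hC.eigenvalues p.1 * hA.eigenvalues p.2) := by
  have hone : ((hC.eigenvectorUnitary : Matrix (Fin dK) (Fin dK) ℂ) ⊗ₖ
        (hA.eigenvectorUnitary : Matrix (Fin dH) (Fin dH) ℂ)) *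
      ((star (hC.eigenvectorUnitary : Matrix (Fin dK) (Fin dK) ℂ)) ⊗ₖ
        (star (hA.eigenvectorUnitary : Matrix (Fin dH) (Fin dH) ℂ))) = 1 := by
    rw [← Matrix.mul_kronecker_mul,
      (Matrix.mem_unitaryGroup_iff).mp (hC.eigenvectorUnitary).2,
      (Matrix.mem_unitaryGroup_iff).mp (hA.eigenvectorUnitary).2,
      Matrix.one_kronecker_one]
  have hdec : C ⊗ₖ A = ((hC.eigenvectorUnitary : Matrix (Fin dK) (Fin dK) ℂ) ⊗ₖ
        (hA.eigenvectorUnitary : Matrix (Fin dH) (Fin dH) ℂ)) *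
      ((Matrix.diagonal (RCLike.ofReal ∘ hC.eigenvalues)) ⊗ₖ
        (Matrix.diagonal (RCLike.ofReal ∘ hA.eigenvalues))) *
      ((star (hC.eigenvectorUnitary : Matrix (Fin dK) (Fin dK) ℂ)) ⊗ₖ
        (star (hA.eigenvectorUnitary : Matrix (Fin dH) (Fin dH) ℂ))) := by
    conv_lhs => rw [hC.spectral_theorem, hA.spectral_theorem, Unitary.conjStarAlgAut_apply,
      Unitary.conjStarAlgAut_apply]
    rw [← Matrix.mul_kronecker_mul, ← Matrix.mul_kronecker_mul]
  have hchar : (C ⊗ₖ A).charpoly = ∏ p : Fin dK × Fin dH,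
      (X - Polynomial.C (((hC.eigenvalues p.1 * hA.eigenvalues p.2 : ℝ) : ℂ))) := by
    rw [hdec, charpoly_mul_conj _ _ _ hone, Matrix.diagonal_kronecker_diagonal, charpoly_diag]
    refine Finset.prod_congr rfl fun p _ => ?_
    congr 1
    push_cast
    rfl
  have h3 := congrArg Polynomial.roots ((herm_charpoly hCA).symm.trans hchar)
  rw [roots_prod_fn, roots_prod_fn] at h3
  have h4 : (Finset.univ.val.map hCA.eigenvalues).map Complex.ofReal
      = (Finset.univ.val.map
          (fun p : Fin dK × Fin dH => hC.eigenvalues p.1 * hA.eigenvalues p.2)).map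
        Complex.ofReal := by
    rw [Multiset.map_map, Multiset.map_map]
    exact h3
  exact Multiset.map_injective Complex.ofReal_injective h4


/-- If `λ(A) ⪰ λ(B)` then `λ(C ⊗ A) ⪰ λ(C ⊗ B)` for self-adjoint `A, B, C`. -/
theorem stmt3 {dK dH : ℕ} (C : Matrix (Fin dK) (Fin dK) ℂ)
    (A B : Matrix (Fin dH) (Fin dH) ℂ)
    (hC : C.IsHermitian) (hA : A.IsHermitian) (hB : B.IsHermitian)
    (hCA : (C ⊗ₖ A).IsHermitian) (hCB : (C ⊗ₖ B).IsHermitian)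
    (h : Maj hA.eigenvalues hB.eigenvalues) :
    Maj hCA.eigenvalues hCB.eigenvalues := by
  have hmaj : Maj (fun p : Fin dK × Fin dH => hC.eigenvalues p.1 * hA.eigenvalues p.2)
      (fun p : Fin dK × Fin dH => hC.eigenvalues p.1 * hB.eigenvalues p.2) := by
    refine maj_prod (X := fun k i => hC.eigenvalues k * hA.eigenvalues i)
      (Y := fun k i => hC.eigenvalues k * hB.eigenvalues i) fun k => ?_
    rcases le_total 0 (hC.eigenvalues k) with hk | hk
    · exact maj_smul_nonneg hk h
    · exact maj_smul_nonpos hk h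
  classical
  exact maj_congr (eig_kron C A hC hA hCA).symm (eig_kron C B hC hB hCB).symm hmaj
end

section
/- For any state $Q$ on $\mathbb{C}^d$ with maximal eigenvector $|q_1\rangle$, any probability measure $\mu$ on subsets of $[n]$, and any tuple of states $(\rho_I)_{I\subseteq[n]}$ where $\rho_I$ acts on the qudits in $I$, the largest eigenvalue satisfies $\lambda_1\big(\sum_{I\subseteq[n]}\mu_I\, \rho_I\otimes Q^{\otimes I^c}\big) \le \lambda_1\big(\sum_{I\subseteq[n]}\mu_I\, |q_1\rangle\langle q_1|^{\otimes I}\otimes Q^{\otimes I^c}\big)$. -/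
open Matrix
open scoped ComplexOrder Kronecker

-- quadratic form of a weighted sum
lemma quad_sum {α : Type*} {m : Type*} [Fintype m] (s : Finset α) (c : α → ℂ)
    (M : α → Matrix m m ℂ) (u v : m → ℂ) :
    u ⬝ᵥ ((∑ i ∈ s, c i • M i) *ᵥ v) = ∑ i ∈ s, c i * (u ⬝ᵥ (M i *ᵥ v)) := by
  induction s using Finset.cons_induction with
  | empty => simp
  | cons a s ha ih =>
    simp [Finset.sum_cons, Matrix.add_mulVec, dotProduct_add, ih, Matrix.smul_mulVec,
      dotProduct_smul, smul_eq_mul]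

-- c•1 - M is PSD when eigenvalues ≤ c
lemma herm_smul_one_sub_psd {m : Type*} [Fintype m] [DecidableEq m]
    {M : Matrix m m ℂ} (hM : M.IsHermitian) (c : ℝ)
    (hc : ∀ i, hM.eigenvalues i ≤ c) :
    ((c : ℂ) • (1 : Matrix m m ℂ) - M).PosSemidef := by
  have hU : (hM.eigenvectorUnitary : Matrix m m ℂ) * (star hM.eigenvectorUnitary : Matrix m m ℂ) = 1 :=
    (Matrix.mem_unitaryGroup_iff).mp hM.eigenvectorUnitary.2
  have key : (c : ℂ) • (1 : Matrix m m ℂ) - M =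
      (hM.eigenvectorUnitary : Matrix m m ℂ) *
        diagonal (fun i => ((c - hM.eigenvalues i : ℝ) : ℂ)) *
        (hM.eigenvectorUnitary : Matrix m m ℂ)ᴴ := by
    conv_lhs => rw [hM.spectral_theorem, Unitary.conjStarAlgAut_apply]
    rw [← Matrix.star_eq_conjTranspose]
    have h1 : (c : ℂ) • (1 : Matrix m m ℂ) =
        (hM.eigenvectorUnitary : Matrix m m ℂ) * ((c:ℂ) • 1) *
          (star hM.eigenvectorUnitary : Matrix m m ℂ) := by
      rw [Matrix.mul_smul, Matrix.smul_mul, mul_one, hU]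
    rw [h1, ← Matrix.sub_mul, ← Matrix.mul_sub]
    congr 1
    congr 1
    rw [Matrix.smul_one_eq_diagonal, Matrix.diagonal_sub]
    congr 1
    ext i
    push_cast
    simp
  rw [key]
  exact (Matrix.PosSemidef.diagonal (fun i => by
    simpa using Complex.zero_le_real.mpr (sub_nonneg.mpr (hc i)))).mul_mul_conjTranspose_same _

lemma herm_trace_eq {m : Type*} [Fintype m] [DecidableEq m] {M : Matrix m m ℂ}
    (hM : M.IsHermitian) : M.trace = ∑ i, (hM.eigenvalues i : ℂ) := by
  conv_lhs => rw [hM.spectral_theorem, Unitary.conjStarAlgAut_apply]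
  rw [Matrix.trace_mul_cycle, (Matrix.mem_unitaryGroup_iff').mp hM.eigenvectorUnitary.2, one_mul,
    Matrix.trace_diagonal]
  rfl

lemma eig_le_one {m : Type*} [Fintype m] [DecidableEq m] {M : Matrix m m ℂ}
    (hM : M.PosSemidef) (htr : M.trace = 1) (i : m) : hM.1.eigenvalues i ≤ 1 := by
  have h := herm_trace_eq hM.1
  rw [htr] at h
  have h2 : (∑ j, hM.1.eigenvalues j : ℝ) = 1 := by
    have := h.symm
    exact_mod_cast this
  calc hM.1.eigenvalues i ≤ ∑ j, hM.1.eigenvalues j :=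
        Finset.single_le_sum (fun j _ => hM.eigenvalues_nonneg j) (Finset.mem_univ i)
    _ = 1 := h2

lemma kron_conjTranspose {l m p q : Type*} (A : Matrix l m ℂ) (B : Matrix p q ℂ) :
    (A ⊗ₖ B)ᴴ = Aᴴ ⊗ₖ Bᴴ := by
  ext ⟨i, j⟩ ⟨k, l'⟩
  simp [Matrix.conjTranspose_apply, Matrix.kroneckerMap_apply, star_mul']

lemma sub_kron {l m p q : Type*} (A B : Matrix l m ℂ) (C : Matrix p q ℂ) :
    (A - B) ⊗ₖ C = A ⊗ₖ C - B ⊗ₖ C := by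
  ext ⟨i, j⟩ ⟨k, l'⟩
  simp [Matrix.kroneckerMap_apply, sub_mul]

lemma kron_sub {l m p q : Type*} (A : Matrix l m ℂ) (B C : Matrix p q ℂ) :
    A ⊗ₖ (B - C) = A ⊗ₖ B - A ⊗ₖ C := by
  ext ⟨i, j⟩ ⟨k, l'⟩
  simp [Matrix.kroneckerMap_apply, mul_sub]

lemma kron_psd {m p : Type*} [Fintype m] [Fintype p] [DecidableEq m] [DecidableEq p]
    {A : Matrix m m ℂ} {B : Matrix p p ℂ} (hA : A.PosSemidef) (hB : B.PosSemidef) :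
    (A ⊗ₖ B).PosSemidef := by
  exact hA.kronecker hB

lemma prod_one_apply {ι : Type*} [Fintype ι] [DecidableEq ι] {d : ℕ} (x y : ι → Fin d) :
    ∏ i, (1 : Matrix (Fin d) (Fin d) ℂ) (x i) (y i)
      = (1 : Matrix (ι → Fin d) (ι → Fin d) ℂ) x y := by
  simp only [Matrix.one_apply, Finset.prod_ite_eq, Finset.prod_boole]
  by_cases h : x = y
  · simp [h]
  · rw [if_neg h, if_neg]
    simpa [funext_iff] using h

lemma tensor_pow_bound {ι : Type*} [Fintype ι] [DecidableEq ι] {d : ℕ}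
    {Q : Matrix (Fin d) (Fin d) ℂ} (hQ : Q.PosSemidef) (r : ℝ)
    (hr : ∀ i, hQ.1.eigenvalues i ≤ r) :
    (Matrix.of fun x y : ι → Fin d => ∏ i, Q (x i) (y i)).PosSemidef ∧
    (((r ^ Fintype.card ι : ℝ) : ℂ) • (1 : Matrix (ι → Fin d) (ι → Fin d) ℂ)
        - Matrix.of fun x y : ι → Fin d => ∏ i, Q (x i) (y i)).PosSemidef := by
  set U : Matrix (Fin d) (Fin d) ℂ := (hQ.1.eigenvectorUnitary : Matrix (Fin d) (Fin d) ℂ)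
    with hUdef
  set lam : Fin d → ℝ := hQ.1.eigenvalues with hlamdef
  set W : Matrix (ι → Fin d) (ι → Fin d) ℂ :=
    Matrix.of fun x κ => ∏ i, U (x i) (κ i) with hWdef
  have hUU : U * Uᴴ = 1 := by
    rw [← Matrix.star_eq_conjTranspose]
    exact (Matrix.mem_unitaryGroup_iff).mp hQ.1.eigenvectorUnitary.2
  have hWW : W * Wᴴ = 1 := by
    ext x y
    simp only [Matrix.mul_apply, Matrix.conjTranspose_apply, Matrix.of_apply, hWdef,
      star_prod, ← Finset.prod_mul_distrib]
    rw [← Fintype.piFinset_univ,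
      ← Finset.prod_univ_sum (fun _ : ι => (Finset.univ : Finset (Fin d)))
        (fun i k => U (x i) k * star (U (y i) k))]
    have h1 : ∀ i, ∑ k, U (x i) k * star (U (y i) k)
        = (1 : Matrix (Fin d) (Fin d) ℂ) (x i) (y i) := by
      intro i
      rw [← hUU]
      simp [Matrix.mul_apply, Matrix.conjTranspose_apply]
    rw [Finset.prod_congr rfl (fun i _ => h1 i), prod_one_apply]
  -- spectral decomposition of the tensor power
  have hspec : (Matrix.of fun x y : ι → Fin d => ∏ i, Q (x i) (y i))
      = W * diagonal (fun κ => ((∏ i, lam (κ i) : ℝ) : ℂ)) * Wᴴ := by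
    ext x y
    rw [Matrix.mul_apply]
    simp only [Matrix.mul_diagonal, Matrix.conjTranspose_apply, Matrix.of_apply, hWdef,
      star_prod]
    have h2 : ∀ κ : ι → Fin d, (∏ i, U (x i) (κ i)) * ((∏ i, lam (κ i) : ℝ) : ℂ)
        * ∏ i, star (U (y i) (κ i))
        = ∏ i, (U (x i) (κ i) * ((lam (κ i) : ℝ) : ℂ) * star (U (y i) (κ i))) := by
      intro κ
      push_cast
      rw [Finset.prod_mul_distrib, Finset.prod_mul_distrib]
    rw [Finset.sum_congr rfl (fun κ _ => h2 κ), ← Fintype.piFinset_univ,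
      ← Finset.prod_univ_sum (fun _ : ι => (Finset.univ : Finset (Fin d)))
        (fun i k => U (x i) k * ((lam k : ℝ) : ℂ) * star (U (y i) k))]
    refine Finset.prod_congr rfl fun i _ => ?_
    conv_lhs => rw [hQ.1.spectral_theorem, Unitary.conjStarAlgAut_apply]
    rw [Matrix.mul_apply]
    refine Finset.sum_congr rfl fun k _ => ?_
    simp [Matrix.mul_diagonal, hUdef, hlamdef, Matrix.star_eq_conjTranspose,
      Matrix.conjTranspose_apply, RCLike.ofReal_alg]
  constructor
  · rw [hspec]
    refine (Matrix.PosSemidef.diagonal fun κ => ?_).mul_mul_conjTranspose_same W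
    exact Complex.zero_le_real.mpr (Finset.prod_nonneg fun i _ => hQ.eigenvalues_nonneg _)
  · have hone : ((r ^ Fintype.card ι : ℝ) : ℂ) • (1 : Matrix (ι → Fin d) (ι → Fin d) ℂ)
        = W * diagonal (fun _ : ι → Fin d => ((r ^ Fintype.card ι : ℝ) : ℂ)) * Wᴴ := by
      rw [← Matrix.smul_one_eq_diagonal, Matrix.mul_smul, Matrix.smul_mul, mul_one, hWW]
    rw [hspec, hone, ← Matrix.sub_mul, ← Matrix.mul_sub, Matrix.diagonal_sub]
    refine (Matrix.PosSemidef.diagonal fun κ => ?_).mul_mul_conjTranspose_same W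
    rw [← Complex.ofReal_sub]
    refine Complex.zero_le_real.mpr (sub_nonneg.mpr ?_)
    calc ∏ i, lam (κ i) ≤ ∏ _i : ι, r :=
          Finset.prod_le_prod (fun i _ => hQ.eigenvalues_nonneg _) (fun i _ => hr _)
      _ = r ^ Fintype.card ι := by rw [Finset.prod_const, Finset.card_univ]

lemma key_bound {n d : ℕ} {Q : Matrix (Fin d) (Fin d) ℂ} (hQ : Q.PosSemidef) (r : ℝ)
    (hr : ∀ i, hQ.1.eigenvalues i ≤ r) (I : Finset (Fin n))
    (ρI : Matrix ({i // i ∈ I} → Fin d) ({i // i ∈ I} → Fin d) ℂ)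
    (hρp : ρI.PosSemidef) (htr : ρI.trace = 1) :
    (((r ^ Iᶜ.card : ℝ) : ℂ) • (1 : Matrix (Fin n → Fin d) (Fin n → Fin d) ℂ)
      - Matrix.of (fun x y : Fin n → Fin d =>
          ρI (fun i => x i.1) (fun i => y i.1) * ∏ j ∈ Iᶜ, Q (x j) (y j))).PosSemidef := by
  classical
  set P : Matrix ({i // ¬ i ∈ I} → Fin d) ({i // ¬ i ∈ I} → Fin d) ℂ :=
    Matrix.of (fun x y : {i // ¬ i ∈ I} → Fin d => ∏ j, Q (x j) (y j)) with hPdef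
  have hcard : Fintype.card {i : Fin n // ¬ i ∈ I} = Iᶜ.card := by
    rw [Fintype.card_subtype]
    congr 1
    ext i
    simp
  set e : (Fin n → Fin d) ≃ ({i // i ∈ I} → Fin d) × ({i // ¬ i ∈ I} → Fin d) :=
    Equiv.piEquivPiSubtypeProd (fun i => i ∈ I) (fun _ => Fin d) with hedef
  obtain ⟨hP1, hP2⟩ := tensor_pow_bound (ι := {i : Fin n // ¬ i ∈ I}) hQ r hr
  rw [hcard] at hP2
  have h1ρ : ((1 : Matrix ({i // i ∈ I} → Fin d) ({i // i ∈ I} → Fin d) ℂ) - ρI).PosSemidef := by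
    have := herm_smul_one_sub_psd hρp.1 1 (eig_le_one hρp htr)
    simpa using this
  have decomp : (((r ^ Iᶜ.card : ℝ) : ℂ) •
        (1 : Matrix (({i // i ∈ I} → Fin d) × ({i // ¬ i ∈ I} → Fin d)) _ ℂ) - ρI ⊗ₖ P)
      = ((1 - ρI) ⊗ₖ P) +
        ((1 : Matrix ({i // i ∈ I} → Fin d) ({i // i ∈ I} → Fin d) ℂ) ⊗ₖ
          (((r ^ Iᶜ.card : ℝ) : ℂ) • 1 - P)) := by
    rw [sub_kron, kron_sub, Matrix.kronecker_smul, Matrix.one_kronecker_one]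
    abel
  have hkron : ((((r ^ Iᶜ.card : ℝ) : ℂ) •
      (1 : Matrix (({i // i ∈ I} → Fin d) × ({i // ¬ i ∈ I} → Fin d)) _ ℂ) - ρI ⊗ₖ P)).PosSemidef := by
    rw [decomp]
    exact (kron_psd h1ρ hP1).add (kron_psd Matrix.PosSemidef.one hP2)
  have hfin : (((r ^ Iᶜ.card : ℝ) : ℂ) • (1 : Matrix (Fin n → Fin d) (Fin n → Fin d) ℂ)
      - Matrix.of (fun x y : Fin n → Fin d =>
          ρI (fun i => x i.1) (fun i => y i.1) * ∏ j ∈ Iᶜ, Q (x j) (y j)))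
      = ((((r ^ Iᶜ.card : ℝ) : ℂ) • 1 - ρI ⊗ₖ P)).submatrix e e := by
    ext x y
    simp only [Matrix.sub_apply, Matrix.smul_apply, Matrix.submatrix_apply, Matrix.of_apply,
      Matrix.kroneckerMap_apply, smul_eq_mul]
    congr 1
    · congr 1
      rw [Matrix.one_apply, Matrix.one_apply]
      simp [EmbeddingLike.apply_eq_iff_eq]
    · have hx : (e x).1 = fun i : {i // i ∈ I} => x i.1 := rfl
      have hx2 : (e x).2 = fun i : {i // ¬ i ∈ I} => x i.1 := rfl
      have hy : (e y).1 = fun i : {i // i ∈ I} => y i.1 := rfl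
      have hy2 : (e y).2 = fun i : {i // ¬ i ∈ I} => y i.1 := rfl
      rw [hx, hx2, hy, hy2, hPdef]
      congr 1
      rw [Finset.prod_subtype Iᶜ (fun i => Finset.mem_compl) (fun j => Q (x j) (y j))]
      rfl
  rw [hfin]
  exact hkron.submatrix e

lemma wq_norm {n d : ℕ} (q1 : Fin d → ℂ) (h : dotProduct (star q1) q1 = 1) :
    dotProduct (star (fun x : Fin n → Fin d => ∏ i, q1 (x i)))
      (fun x => ∏ i, q1 (x i)) = 1 := by
  have h1 : ∑ k, star (q1 k) * q1 k = 1 := by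
    rw [← h]; simp only [dotProduct, Pi.star_apply]
  simp only [dotProduct, Pi.star_apply, star_prod, ← Finset.prod_mul_distrib]
  rw [← Fintype.piFinset_univ,
    ← Finset.prod_univ_sum (fun _ : Fin n => (Finset.univ : Finset (Fin d)))
      (fun i k => star (q1 k) * q1 k)]
  simp only [h1, Finset.prod_const_one]

lemma bterm {n d : ℕ} (Q : Matrix (Fin d) (Fin d) ℂ) (q1 : Fin d → ℂ)
    (hq1norm : dotProduct (star q1) q1 = 1) (r : ℝ) (hq1eig : Q *ᵥ q1 = (r : ℂ) • q1)
    (I : Finset (Fin n)) :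
    dotProduct (star (fun x : Fin n → Fin d => ∏ i, q1 (x i)))
      ((Matrix.of fun x y : Fin n → Fin d =>
        ((∏ i : {i // i ∈ I}, q1 (x i.1)) * star (∏ i : {i // i ∈ I}, q1 (y i.1))) *
          ∏ j ∈ Iᶜ, Q (x j) (y j)) *ᵥ (fun x => ∏ i, q1 (x i)))
      = ((r ^ Iᶜ.card : ℝ) : ℂ) := by
  classical
  set g : Fin n → Fin d → Fin d → ℂ := fun i a b =>
    star (q1 a) * q1 b * (if i ∈ I then q1 a * star (q1 b) else Q a b) with hg
  have hq1 : ∑ k, star (q1 k) * q1 k = 1 := by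
    rw [← hq1norm]; simp only [dotProduct, Pi.star_apply]
  have hq1' : ∑ k, q1 k * star (q1 k) = 1 := by
    rw [← hq1]; exact Finset.sum_congr rfl fun k _ => mul_comm _ _
  -- pointwise identity
  have hpt : ∀ x y : Fin n → Fin d,
      star (∏ i, q1 (x i)) *
        ((((∏ i : {i // i ∈ I}, q1 (x i.1)) * star (∏ i : {i // i ∈ I}, q1 (y i.1))) *
            ∏ j ∈ Iᶜ, Q (x j) (y j)) * (∏ i, q1 (y i)))
      = ∏ i, g i (x i) (y i) := by
    intro x y
    have hsub : ∀ z : Fin n → Fin d,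
        (∏ i : {i // i ∈ I}, q1 (z i.1)) = ∏ i ∈ I, q1 (z i) :=
      fun z => (Finset.prod_subtype I (fun _ => Iff.rfl) (fun i => q1 (z i))).symm
    have hite : ∏ i, (if i ∈ I then q1 (x i) * star (q1 (y i)) else Q (x i) (y i))
        = ((∏ i ∈ I, q1 (x i)) * ∏ i ∈ I, star (q1 (y i))) * ∏ j ∈ Iᶜ, Q (x j) (y j) := by
      rw [← Finset.prod_mul_prod_compl I
        (fun i => if i ∈ I then q1 (x i) * star (q1 (y i)) else Q (x i) (y i))]
      congr 1
      · rw [Finset.prod_congr rfl (fun i hi => if_pos hi), Finset.prod_mul_distrib]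
      · exact Finset.prod_congr rfl fun i hi => if_neg (Finset.mem_compl.mp hi)
    have hsplit : (∏ i, g i (x i) (y i)) =
        ((∏ i, star (q1 (x i))) * (∏ i, q1 (y i))) *
          (((∏ i ∈ I, q1 (x i)) * ∏ i ∈ I, star (q1 (y i))) * ∏ j ∈ Iᶜ, Q (x j) (y j)) := by
      rw [hg]
      simp only [Finset.prod_mul_distrib]
      rw [hite]
    rw [hsplit, hsub x, hsub y, star_prod, star_prod]
    ring
  -- expand the quadratic form as a double sum
  have hexpand : dotProduct (star (fun x : Fin n → Fin d => ∏ i, q1 (x i)))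
      ((Matrix.of fun x y : Fin n → Fin d =>
        ((∏ i : {i // i ∈ I}, q1 (x i.1)) * star (∏ i : {i // i ∈ I}, q1 (y i.1))) *
          ∏ j ∈ Iᶜ, Q (x j) (y j)) *ᵥ (fun x => ∏ i, q1 (x i)))
      = ∑ x : Fin n → Fin d, ∑ y : Fin n → Fin d, ∏ i, g i (x i) (y i) := by
    simp only [dotProduct, Matrix.mulVec, Pi.star_apply, Finset.mul_sum, Matrix.of_apply]
    exact Finset.sum_congr rfl fun x _ => Finset.sum_congr rfl fun y _ => hpt x y
  rw [hexpand]
  -- factor the double sum coordinatewise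
  have hfactor : (∏ i, ∑ p : Fin d × Fin d, g i p.1 p.2)
      = ∑ x : Fin n → Fin d, ∑ y : Fin n → Fin d, ∏ i, g i (x i) (y i) := by
    rw [Finset.prod_univ_sum, Fintype.piFinset_univ]
    have h2 : ∑ κ : Fin n → Fin d × Fin d, ∏ i, g i (κ i).1 (κ i).2
        = ∑ p : (Fin n → Fin d) × (Fin n → Fin d), ∏ i, g i (p.1 i) (p.2 i) :=
      Fintype.sum_equiv (Equiv.arrowProdEquivProdArrow (Fin n) (fun _ => Fin d) (fun _ => Fin d)) _ _
        (fun κ => rfl)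
    rw [h2, Fintype.sum_prod_type]
  rw [← hfactor]
  -- evaluate each coordinate factor
  have hQr : dotProduct (star q1) (Q *ᵥ q1) = (r : ℂ) := by
    rw [hq1eig, dotProduct_smul, hq1norm, smul_eq_mul, mul_one]
  have hcoord : ∀ i : Fin n, (∑ p : Fin d × Fin d, g i p.1 p.2)
      = (if i ∈ I then 1 else (r : ℂ)) := by
    intro i
    rw [Fintype.sum_prod_type]
    by_cases hi : i ∈ I
    · rw [if_pos hi]
      have hrow : ∀ a, ∑ b, g i a b = star (q1 a) * q1 a := by
        intro a
        have hb : ∀ b, g i a b = (star (q1 a) * q1 a) * (q1 b * star (q1 b)) := by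
          intro b; rw [hg]; simp only [if_pos hi]; ring
        rw [Finset.sum_congr rfl (fun b _ => hb b), ← Finset.mul_sum, hq1', mul_one]
      rw [Finset.sum_congr rfl (fun a _ => hrow a), hq1]
    · rw [if_neg hi]
      have hrow : ∀ a, ∑ b, g i a b = star (q1 a) * (Q *ᵥ q1) a := by
        intro a
        have hb : ∀ b, g i a b = star (q1 a) * (Q a b * q1 b) := by
          intro b; rw [hg]; simp only [if_neg hi]; ring
        rw [Finset.sum_congr rfl (fun b _ => hb b), ← Finset.mul_sum]
        rfl
      rw [Finset.sum_congr rfl (fun a _ => hrow a), ← hQr]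
      simp only [dotProduct, Pi.star_apply]
  rw [Finset.prod_congr rfl (fun i _ => hcoord i)]
  -- compute the product of the ite
  have hsplit2 : (∏ i, (if i ∈ I then (1:ℂ) else (r : ℂ)))
      = (∏ i ∈ I, (1:ℂ)) * ∏ j ∈ Iᶜ, (r : ℂ) := by
    rw [← Finset.prod_mul_prod_compl I (fun i => if i ∈ I then (1:ℂ) else (r : ℂ))]
    congr 1
    · exact Finset.prod_congr rfl fun i hi => if_pos hi
    · exact Finset.prod_congr rfl fun i hi => if_neg (Finset.mem_compl.mp hi)
  rw [hsplit2, Finset.prod_const_one, one_mul, Finset.prod_const]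
  push_cast
  rfl

/-- Spin alignment for the largest eigenvalue: for any state `Q` with maximal unit
eigenvector `q₁`, probability measure `μ` on subsets of `[n]`, and tuple of states
`(ρ_I)`, the largest eigenvalue of the alignment operator `∑_I μ_I ρ_I ⊗ Q^{⊗Iᶜ}` is at
most that of the one with `ρ_I = |q₁⟩⟨q₁|^{⊗I}`. -/
theorem stmt5 {n d : ℕ} (hd : 0 < d)
    (Q : Matrix (Fin d) (Fin d) ℂ) (hQ : Q.PosSemidef) (hQtr : Q.trace = 1)
    (q1 : Fin d → ℂ) (hq1norm : dotProduct (star q1) q1 = 1)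
    (r : ℝ) (hq1eig : Q *ᵥ q1 = (r : ℂ) • q1)
    (hrmax : ∀ (v : Fin d → ℂ) (s : ℝ), Q *ᵥ v = (s : ℂ) • v → v ≠ 0 → s ≤ r)
    (μ : Finset (Fin n) → ℝ) (hμ0 : ∀ I, 0 ≤ μ I) (hμ1 : ∑ I, μ I = 1)
    (ρ : (I : Finset (Fin n)) →
      Matrix ({i // i ∈ I} → Fin d) ({i // i ∈ I} → Fin d) ℂ)
    (hρ : ∀ I, (ρ I).PosSemidef ∧ (ρ I).trace = 1)
    (hA : (∑ I : Finset (Fin n), (↑(μ I) : ℂ) •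
      Matrix.of (fun x y : Fin n → Fin d =>
        ρ I (fun i => x i.1) (fun i => y i.1) * ∏ j ∈ Iᶜ, Q (x j) (y j))).IsHermitian)
    (hB : (∑ I : Finset (Fin n), (↑(μ I) : ℂ) •
      Matrix.of (fun x y : Fin n → Fin d =>
        ((∏ i : {i // i ∈ I}, q1 (x i.1)) * star (∏ i : {i // i ∈ I}, q1 (y i.1))) *
          ∏ j ∈ Iᶜ, Q (x j) (y j))).IsHermitian) :
    ∀ a, hA.eigenvalues a ≤ ⨆ b, hB.eigenvalues b := by
  intro a
  classical
  have hQeig : ∀ i, hQ.1.eigenvalues i ≤ r := by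
    intro i
    refine hrmax (⇑(hQ.1.eigenvectorBasis i)) (hQ.1.eigenvalues i) ?_ ?_
    · rw [hQ.1.mulVec_eigenvectorBasis i]
      ext j
      simp [Complex.real_smul]
    · intro h0
      exact hQ.1.eigenvectorBasis.orthonormal.ne_zero i (by ext j; exact congrFun h0 j)
  set c : ℝ := ⨆ b, hB.eigenvalues b with hcdef
  have hBle : ∀ b, hB.eigenvalues b ≤ c :=
    fun b => le_ciSup (Set.finite_range _).bddAbove b
  set w : (Fin n → Fin d) → ℂ := fun x => ∏ i, q1 (x i) with hwdef
  have hw1 : dotProduct (star w) w = 1 := wq_norm q1 hq1norm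
  set S : ℂ := ∑ I : Finset (Fin n), (μ I : ℂ) * ((r ^ Iᶜ.card : ℝ) : ℂ) with hSdef
  have hwB : dotProduct (star w) ((∑ I : Finset (Fin n), (↑(μ I) : ℂ) •
      Matrix.of (fun x y : Fin n → Fin d =>
        ((∏ i : {i // i ∈ I}, q1 (x i.1)) * star (∏ i : {i // i ∈ I}, q1 (y i.1))) *
          ∏ j ∈ Iᶜ, Q (x j) (y j))) *ᵥ w) = S := by
    rw [quad_sum]
    exact Finset.sum_congr rfl fun I _ => by rw [bterm Q q1 hq1norm r hq1eig I]
  have hBpsd := herm_smul_one_sub_psd hB c hBle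
  have hSle : S ≤ (c : ℂ) := by
    rw [← hwB]
    have h0 := hBpsd.dotProduct_mulVec_nonneg w
    rw [Matrix.sub_mulVec, dotProduct_sub, Matrix.smul_mulVec, Matrix.one_mulVec,
      dotProduct_smul, hw1, smul_eq_mul, mul_one] at h0
    exact sub_nonneg.mp h0
  set v : (Fin n → Fin d) → ℂ := ⇑(hA.eigenvectorBasis a) with hvdef
  have hv1 : dotProduct (star v) v = 1 := by
    have h2 : (inner ℂ (hA.eigenvectorBasis a) (hA.eigenvectorBasis a) : ℂ) = 1 := by
      rw [inner_self_eq_norm_sq_to_K, hA.eigenvectorBasis.orthonormal.1 a]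
      norm_num
    rw [EuclideanSpace.inner_eq_star_dotProduct, dotProduct_comm] at h2
    exact h2
  have hvA : dotProduct (star v) ((∑ I : Finset (Fin n), (↑(μ I) : ℂ) •
      Matrix.of (fun x y : Fin n → Fin d =>
        ρ I (fun i => x i.1) (fun i => y i.1) * ∏ j ∈ Iᶜ, Q (x j) (y j))) *ᵥ v) ≤ S := by
    rw [quad_sum, hSdef]
    refine Finset.sum_le_sum fun I _ => ?_
    have h0 := (key_bound hQ r hQeig I (ρ I) (hρ I).1 (hρ I).2).dotProduct_mulVec_nonneg v
    rw [Matrix.sub_mulVec, dotProduct_sub, Matrix.smul_mulVec, Matrix.one_mulVec,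
      dotProduct_smul, hv1, smul_eq_mul, mul_one] at h0
    exact mul_le_mul_of_nonneg_left (sub_nonneg.mp h0)
      (Complex.zero_le_real.mpr (hμ0 I))
  have hchain := le_trans hvA hSle
  rw [hA.eigenvalues_eq a]
  have hre := (Complex.le_def.mp hchain).1
  simp at hre ⊢
  exact hre
end

section
/- Let $P_1, P_2$ be orthogonal projectors on a $d$-dimensional Hilbert space with ranks $r_1, r_2$. If $r_1 + r_2 - d > \lfloor c \rfloor$ for some $c\ge 0$, then $\operatorname{tr}(|P_1 P_2|) > c$, where $|X| = \sqrt{X^* X}$. -/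
open Matrix
open scoped ComplexOrder

/-- The positive semidefinite square root of a positive semidefinite matrix
(the definition `Matrix.PosSemidef.sqrt` of the older Mathlib, since removed). -/
noncomputable def Matrix.PosSemidef.sqrt {n : Type*} [Fintype n] [DecidableEq n]
    {𝕜 : Type*} [RCLike 𝕜] {A : Matrix n n 𝕜} (hA : A.PosSemidef) : Matrix n n 𝕜 :=
  (hA.1.eigenvectorUnitary : Matrix n n 𝕜) *
    diagonal (((↑) : ℝ → 𝕜) ∘ (√·) ∘ hA.1.eigenvalues) *
  (star hA.1.eigenvectorUnitary : Matrix n n 𝕜)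

variable {d : ℕ}

lemma aux_psd_of_proj {P : Matrix (Fin d) (Fin d) ℂ} (h : P.IsHermitian) (hi : P * P = P) :
    P.PosSemidef := by
  have := Matrix.posSemidef_conjTranspose_mul_self P
  rwa [h.eq, hi] at this

lemma aux_trace_re_nonneg {X : Matrix (Fin d) (Fin d) ℂ} (hX : X.PosSemidef) :
    0 ≤ X.trace.re := by
  have h : ∀ i, 0 ≤ (X i i).re := by
    intro i
    have := hX.dotProduct_mulVec_nonneg (Pi.single i 1)
    have hd : star (Pi.single i 1 : Fin d → ℂ) ⬝ᵥ X *ᵥ Pi.single i 1 = X i i := by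
      simp [dotProduct, mulVec, Pi.single_apply, Finset.sum_ite_eq]
    rw [hd] at this
    exact (Complex.le_def.mp this).1
  rw [Matrix.trace]
  simp only [Complex.re_sum]
  exact Finset.sum_nonneg fun i _ => h i

lemma aux_trace_eq_sum_eigenvalues {X : Matrix (Fin d) (Fin d) ℂ} (hX : X.IsHermitian) :
    X.trace = ∑ i, (hX.eigenvalues i : ℂ) := by
  conv_lhs => rw [hX.spectral_theorem, Unitary.conjStarAlgAut_apply]
  rw [Matrix.trace_mul_cycle]
  rw [show (star hX.eigenvectorUnitary : Matrix (Fin d) (Fin d) ℂ) * hX.eigenvectorUnitary = 1 from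
    Unitary.coe_star_mul_self hX.eigenvectorUnitary]
  simp [Matrix.trace_diagonal]

lemma aux_eig01 {P : Matrix (Fin d) (Fin d) ℂ} (h : P.IsHermitian) (hi : P * P = P) (i : Fin d) :
    h.eigenvalues i = 0 ∨ h.eigenvalues i = 1 := by
  set t := h.eigenvalues i with ht
  set v := ⇑(h.eigenvectorBasis i) with hvdef
  have hv := h.mulVec_eigenvectorBasis i
  have hv2 : P *ᵥ (P *ᵥ v) = (t * t) • v := by
    rw [← hvdef] at hv
    rw [hv, mulVec_smul, hv, smul_smul]
  rw [mulVec_mulVec, hi, hv] at hv2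
  have hvne : v ≠ 0 := by
    have := h.eigenvectorBasis.orthonormal.ne_zero i
    intro hc
    exact this (by ext j; exact congrFun hc j)
  have hz : (t - t * t) • v = 0 := by rw [sub_smul, hv2, sub_self]
  rcases smul_eq_zero.mp hz with h0 | h0
  · have : t = t * t := by linarith [sub_eq_zero.mp h0]
    rcases mul_eq_zero.mp (show t * (t - 1) = 0 by nlinarith) with h' | h'
    · exact Or.inl h'
    · exact Or.inr (by linarith)
  · exact absurd h0 hvne

lemma aux_trace_re_proj {P : Matrix (Fin d) (Fin d) ℂ} (h : P.IsHermitian) (hi : P * P = P) :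
    P.trace.re = P.rank := by
  rw [aux_trace_eq_sum_eigenvalues h]
  rw [h.rank_eq_card_non_zero_eigs]
  simp only [Complex.re_sum, Complex.ofReal_re]
  rw [Fintype.card_subtype]
  rw [Finset.card_eq_sum_ones]
  push_cast
  refine Finset.sum_congr rfl ?_ |>.trans (Finset.sum_filter _ _).symm
  intro i _
  rcases aux_eig01 h hi i with h0 | h0 <;> simp [h0]

lemma aux_eig_le_one {X : Matrix (Fin d) (Fin d) ℂ} (hX : X.IsHermitian)
    (h1 : (1 - X).PosSemidef) (i : Fin d) : hX.eigenvalues i ≤ 1 := by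
  have hv := hX.eigenvalues_eq i
  set v := ⇑(hX.eigenvectorBasis i) with hvdef
  have hvv : star v ⬝ᵥ v = 1 := by
    have h2 := hX.eigenvectorBasis.orthonormal.1 i
    have := EuclideanSpace.inner_eq_star_dotProduct (hX.eigenvectorBasis i) (hX.eigenvectorBasis i)
    rw [@inner_self_eq_norm_sq_to_K ℂ] at this
    rw [h2] at this
    rw [dotProduct_comm]
    simpa using this.symm
  have hnn := h1.dotProduct_mulVec_nonneg v
  rw [sub_mulVec, one_mulVec, dotProduct_sub, hvv] at hnn
  have := (Complex.le_def.mp hnn).1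
  simp only [Complex.sub_re, Complex.one_re, Complex.zero_re] at this
  rw [hv, RCLike.re_to_complex]
  linarith

lemma aux_trace_sqrt {X : Matrix (Fin d) (Fin d) ℂ} (hX : X.PosSemidef) :
    hX.sqrt.trace = ∑ i, (Real.sqrt (hX.1.eigenvalues i) : ℂ) := by
  rw [Matrix.PosSemidef.sqrt, Matrix.trace_mul_cycle]
  rw [show (star hX.1.eigenvectorUnitary : Matrix (Fin d) (Fin d) ℂ) * hX.1.eigenvectorUnitary = 1
    from Unitary.coe_star_mul_self hX.1.eigenvectorUnitary]
  simp [Matrix.trace_diagonal]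

/-- If projectors `P₁, P₂` on `ℂ^d` have ranks `r₁, r₂` with `r₁ + r₂ - d > ⌊c⌋`, then
`tr |P₁ P₂| > c`, where `|X| = √(X^*X)`. -/
theorem stmt8 {d : ℕ} (P1 P2 : Matrix (Fin d) (Fin d) ℂ)
    (h1 : P1.IsHermitian) (h1i : P1 * P1 = P1)
    (h2 : P2.IsHermitian) (h2i : P2 * P2 = P2)
    (r1 r2 : ℕ) (hr1 : P1.rank = r1) (hr2 : P2.rank = r2)
    (c : ℝ) (hc : 0 ≤ c) (hgap : (⌊c⌋ : ℤ) < (r1 : ℤ) + (r2 : ℤ) - (d : ℤ)) :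
    c < (((Matrix.posSemidef_conjTranspose_mul_self (P1 * P2)).sqrt).trace).re := by
  set hA := Matrix.posSemidef_conjTranspose_mul_self (P1 * P2) with hAdef
  have hAeq : (P1 * P2)ᴴ * (P1 * P2) = P2 * P1 * P2 := by
    rw [conjTranspose_mul, h1.eq, h2.eq, mul_assoc, ← mul_assoc P1, h1i, ← mul_assoc]
  -- idempotent complements
  set Q1 : Matrix (Fin d) (Fin d) ℂ := 1 - P1 with hQ1def
  set Q2 : Matrix (Fin d) (Fin d) ℂ := 1 - P2 with hQ2def
  have hq1 : Q1.IsHermitian := Matrix.isHermitian_one.sub h1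
  have hq2 : Q2.IsHermitian := Matrix.isHermitian_one.sub h2
  have hq1i : Q1 * Q1 = Q1 := by
    rw [hQ1def, sub_mul, one_mul, mul_sub, mul_one, h1i, sub_self, sub_zero]
  have hq2i : Q2 * Q2 = Q2 := by
    rw [hQ2def, sub_mul, one_mul, mul_sub, mul_one, h2i, sub_self, sub_zero]
  -- eigenvalues of A in [0,1]
  have hOne : (1 - ((P1 * P2)ᴴ * (P1 * P2))).PosSemidef := by
    rw [hAeq]
    have heq : (1 : Matrix (Fin d) (Fin d) ℂ) - P2 * P1 * P2 = Q2 + P2 * Q1 * P2 := by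
      rw [hQ2def, hQ1def, mul_sub, mul_one, sub_mul, h2i]
      abel
    rw [heq]
    refine (aux_psd_of_proj hq2 hq2i).add ?_
    have := (aux_psd_of_proj hq1 hq1i).mul_mul_conjTranspose_same P2
    rwa [h2.eq] at this
  have hle1 : ∀ i, hA.1.eigenvalues i ≤ 1 := fun i => aux_eig_le_one hA.1 hOne i
  have hge0 : ∀ i, 0 ≤ hA.1.eigenvalues i := fun i => hA.eigenvalues_nonneg i
  -- trace of sqrt
  have hs : (hA.sqrt.trace).re = ∑ i, Real.sqrt (hA.1.eigenvalues i) := by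
    rw [aux_trace_sqrt hA]
    simp [Complex.re_sum]
  -- trace of A
  have hta : (((P1 * P2)ᴴ * (P1 * P2)).trace).re = ∑ i, hA.1.eigenvalues i := by
    rw [aux_trace_eq_sum_eigenvalues hA.1]
    simp [Complex.re_sum]
  -- sum sqrt ≥ sum
  have hsum : ∑ i, hA.1.eigenvalues i ≤ ∑ i, Real.sqrt (hA.1.eigenvalues i) := by
    refine Finset.sum_le_sum fun i _ => ?_
    calc hA.1.eigenvalues i = Real.sqrt ((hA.1.eigenvalues i) ^ 2) :=
          (Real.sqrt_sq (hge0 i)).symm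
      _ ≤ Real.sqrt (hA.1.eigenvalues i) := by
          apply Real.sqrt_le_sqrt
          nlinarith [hge0 i, hle1 i]
  -- trace A = trace (P1*P2)
  have htr_eq : ((P1 * P2)ᴴ * (P1 * P2)).trace = (P1 * P2).trace := by
    rw [hAeq, Matrix.trace_mul_cycle, h2i, Matrix.trace_mul_comm]
  -- key trace inequality
  have hkey : 0 ≤ (Q1 * Q2 * Q1).trace.re := by
    apply aux_trace_re_nonneg
    have := (aux_psd_of_proj hq2 hq2i).mul_mul_conjTranspose_same Q1
    rwa [hq1.eq] at this
  have hQtr : (Q1 * Q2 * Q1).trace = (Q1 * Q2).trace := by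
    rw [Matrix.trace_mul_cycle, hq1i]
  have hexp : Q1 * Q2 = 1 - P1 - P2 + P1 * P2 := by
    rw [hQ1def, hQ2def, sub_mul, one_mul, mul_sub, mul_one]
    abel
  have htrP1 : P1.trace.re = (r1 : ℝ) := by rw [aux_trace_re_proj h1 h1i, hr1]
  have htrP2 : P2.trace.re = (r2 : ℝ) := by rw [aux_trace_re_proj h2 h2i, hr2]
  have htr1 : (1 : Matrix (Fin d) (Fin d) ℂ).trace.re = (d : ℝ) := by
    simp [Matrix.trace_one]
  have hbound : (r1 : ℝ) + (r2 : ℝ) - (d : ℝ) ≤ ((P1 * P2).trace).re := by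
    rw [hQtr, hexp] at hkey
    simp only [Matrix.trace_add, Matrix.trace_sub, Complex.add_re, Complex.sub_re] at hkey
    rw [htrP1, htrP2, htr1] at hkey
    linarith
  -- integer gap to real
  have hgapR : c < (r1 : ℝ) + (r2 : ℝ) - (d : ℝ) := by
    have h5 : ((⌊c⌋ : ℝ) + 1) ≤ (r1 : ℝ) + (r2 : ℝ) - (d : ℝ) := by
      have : (⌊c⌋ : ℤ) + 1 ≤ (r1 : ℤ) + (r2 : ℤ) - (d : ℤ) := hgap
      exact_mod_cast this
    linarith [Int.lt_floor_add_one c]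
  rw [hs]
  calc c < (r1 : ℝ) + (r2 : ℝ) - (d : ℝ) := hgapR
    _ ≤ ((P1 * P2).trace).re := hbound
    _ = ∑ i, hA.1.eigenvalues i := by rw [← htr_eq, hta]
    _ ≤ ∑ i, Real.sqrt (hA.1.eigenvalues i) := hsum
end

section
/- Let $A\subseteq\mathbb{R}$ be convex, $g:A\to\mathbb{R}_{\ge 0}$ convex, and $t\in\mathbb{R}$. Define $G:A^m\to\mathbb{R}^{2m}$ by $G(v) = (t+g(v_1),\ldots,t+g(v_m), t-g(v_1),\ldots,t-g(v_m))$. Then $G$ is strictly isotone with respect to majorization: if $v\succeq w$ (componentwise vectors in $A^m$), then $G(v)\succeq G(w)$. -/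
open Finset

open Finset

noncomputable def sl (g : ℝ → ℝ) (P : Finset ℝ) (c : ℝ) : ℝ :=
  if hL : (P.filter (· < c)).Nonempty then
    (P.filter (· < c)).sup' hL (fun p => (g c - g p) / (c - p))
  else if hR : (P.filter (c < ·)).Nonempty then
    (P.filter (c < ·)).inf' hR (fun p => (g p - g c) / (p - c))
  else 0

lemma slope_le_sl (g : ℝ → ℝ) (P : Finset ℝ) {c q : ℝ} (hq : q ∈ P) (h : q < c) :
    (g c - g q) / (c - q) ≤ sl g P c := by
  have hL : (P.filter (· < c)).Nonempty := ⟨q, by simp [hq, h]⟩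
  rw [sl, dif_pos hL]
  exact Finset.le_sup' (fun p => (g c - g p) / (c - p)) (by simp [hq, h])

lemma sl_le_slope {A : Set ℝ} {g : ℝ → ℝ} (hg : ConvexOn ℝ A g) {P : Finset ℝ}
    (hP : ∀ p ∈ P, p ∈ A) {c q : ℝ} (hq : q ∈ P) (h : c < q) :
    sl g P c ≤ (g q - g c) / (q - c) := by
  rw [sl]
  split_ifs with hL hR
  · apply Finset.sup'_le
    intro u hu
    rw [Finset.mem_filter] at hu
    exact hg.slope_mono_adjacent (hP u hu.1) (hP q hq) hu.2 h
  · exact Finset.inf'_le _ (by simp [hq, h])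
  · exact absurd ⟨q, by simp [hq, h]⟩ hR

lemma sl_minorant {A : Set ℝ} {g : ℝ → ℝ} (hg : ConvexOn ℝ A g) {P : Finset ℝ}
    (hP : ∀ p ∈ P, p ∈ A) {c q : ℝ} (hq : q ∈ P) :
    g c + sl g P c * (q - c) ≤ g q := by
  rcases lt_trichotomy q c with h | h | h
  · have h1 := slope_le_sl g P hq h
    have hqc : 0 < c - q := by linarith
    have : sl g P c * (q - c) ≤ ((g c - g q) / (c - q)) * (q - c) := by
      have hneg : q - c < 0 := by linarith
      exact mul_le_mul_of_nonpos_right h1 hneg.le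
    have heq : ((g c - g q) / (c - q)) * (q - c) = -(g c - g q) := by
      field_simp
      ring
    linarith [this, heq ▸ this]
  · subst h; simp
  · have h1 := sl_le_slope hg hP hq h
    have hqc : 0 < q - c := by linarith
    have : sl g P c * (q - c) ≤ ((g q - g c) / (q - c)) * (q - c) :=
      mul_le_mul_of_nonneg_right h1 hqc.le
    have heq : ((g q - g c) / (q - c)) * (q - c) = g q - g c := by
      field_simp
    linarith [heq ▸ this]

lemma sl_mono {A : Set ℝ} {g : ℝ → ℝ} (hg : ConvexOn ℝ A g) {P : Finset ℝ}
    (hP : ∀ p ∈ P, p ∈ A) {c d : ℝ} (hc : c ∈ P) (hd : d ∈ P) (hcd : c ≤ d) :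
    sl g P c ≤ sl g P d := by
  rcases eq_or_lt_of_le hcd with rfl | h
  · exact le_refl _
  · exact le_trans (sl_le_slope hg hP hd h) (slope_le_sl g P hc h)

lemma abelNeg : ∀ (n : ℕ) (a d : ℕ → ℝ), (∀ i j, i ≤ j → j < n → a i ≤ a j) →
    (∀ i, i < n → a i ≤ 0) → (∀ t, t ≤ n → 0 ≤ ∑ r ∈ Finset.range t, d r) →
    ∑ r ∈ Finset.range n, a r * d r ≤ 0 := by
  intro n
  induction n with
  | zero => intro a d _ _ _; simp
  | succ n ih =>
    intro a d hmono hneg hd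
    have key : ∑ r ∈ Finset.range (n+1), a r * d r
        = ∑ r ∈ Finset.range n, (a r - a n) * d r + a n * ∑ r ∈ Finset.range (n+1), d r := by
      have h0 : ∑ r ∈ Finset.range (n+1), (a r - a n) * d r
          = ∑ r ∈ Finset.range n, (a r - a n) * d r := by
        rw [Finset.sum_range_succ]; simp
      rw [← h0, Finset.mul_sum, ← Finset.sum_add_distrib]
      exact Finset.sum_congr rfl (fun i _ => by ring)
    rw [key]
    have h1 : ∑ r ∈ Finset.range n, (a r - a n) * d r ≤ 0 := by
      apply ih
      · intro i j hij hj; have := hmono i j hij (by omega); linarith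
      · intro i hi; have := hmono i n (by omega) (by omega); linarith
      · intro t ht; exact hd t (by omega)
    have h2 : a n * ∑ r ∈ Finset.range (n+1), d r ≤ 0 :=
      mul_nonpos_of_nonpos_of_nonneg (hneg n (by omega)) (hd (n+1) le_rfl)
    linarith

lemma sum_range_reflect_eq_Ico (e : ℕ → ℝ) (t n : ℕ) (ht : t ≤ n) :
    ∑ r ∈ Finset.range t, e (n - 1 - r) = ∑ r ∈ Finset.Ico (n - t) n, e r := by
  apply Finset.sum_nbij' (fun r => n - 1 - r) (fun r => n - 1 - r)
  · intro a ha; simp only [Finset.mem_range] at ha; simp only [Finset.mem_Ico]; omega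
  · intro a ha; simp only [Finset.mem_Ico] at ha; simp only [Finset.mem_range]; omega
  · intro a ha; simp only [Finset.mem_range] at ha; omega
  · intro a ha; simp only [Finset.mem_Ico] at ha; omega
  · intro a ha; rfl

lemma abelPos (n : ℕ) (a e : ℕ → ℝ) (hmono : ∀ i j, i ≤ j → j < n → a i ≤ a j)
    (hpos : ∀ i, i < n → 0 ≤ a i) (he : ∀ t, t ≤ n → ∑ r ∈ Finset.Ico t n, e r ≤ 0) :
    ∑ r ∈ Finset.range n, a r * e r ≤ 0 := by
  have key : ∑ r ∈ Finset.range n, a r * e r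
      = ∑ r ∈ Finset.range n, (-a (n - 1 - r)) * (-e (n - 1 - r)) := by
    rw [← Finset.sum_range_reflect (fun r => a r * e r) n]
    exact Finset.sum_congr rfl (fun i _ => by simp [neg_mul_neg])
  rw [key]
  apply abelNeg n (fun r => -a (n - 1 - r)) (fun r => -e (n - 1 - r))
  · intro i j hij hj
    have := hmono (n - 1 - j) (n - 1 - i) (by omega) (by omega)
    linarith
  · intro i hi
    have := hpos (n - 1 - i) (by omega)
    linarith
  · intro t ht
    have h1 : ∑ r ∈ Finset.range t, -e (n - 1 - r) = -∑ r ∈ Finset.Ico (n - t) n, e r := by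
      rw [← sum_range_reflect_eq_Ico e t n ht, Finset.sum_neg_distrib]
    rw [h1]
    have := he (n - t) (by omega)
    linarith

lemma enumFinset {m : ℕ} (t : Finset (Fin m)) :
    ∃ I : ℕ → ℕ, (∀ n, n < t.card → I n < m ∧ n ≤ I n ∧ I n ≤ m - t.card + n) ∧
      (∀ n n', n < n' → n' < t.card → I n < I n') ∧
      (∀ f : Fin m → ℝ, ∑ i ∈ t, f i
        = ∑ n ∈ Finset.range t.card, (if h : I n < m then f ⟨I n, h⟩ else 0)) := by
  classical
  set c := t.card with hc
  have e := t.orderIsoOfFin hc.symm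
  refine ⟨fun n => if h : n < c then ((e ⟨n, h⟩ : Fin m) : ℕ) else 0, ?_, ?_, ?_⟩
  all_goals {
    set I : ℕ → ℕ := fun n => if h : n < c then ((e ⟨n, h⟩ : Fin m) : ℕ) else 0 with hI
    have hlt : ∀ n (h : n < c), I n < m := by
      intro n h; rw [hI]; simp only [dif_pos h]; exact (e ⟨n, h⟩ : Fin m).2
    have hsm : ∀ n n', n < n' → n' < c → I n < I n' := by
      intro n n' h h'
      rw [hI]; simp only [dif_pos (lt_trans h h'), dif_pos h']
      have : (⟨n, lt_trans h h'⟩ : Fin c) < ⟨n', h'⟩ := by exact h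
      exact e.strictMono this
    have hlb : ∀ n, n < c → n ≤ I n := by
      intro n
      induction n with
      | zero => intro _; omega
      | succ k ih =>
        intro h
        have h1 := ih (by omega)
        have h2 := hsm k (k+1) (by omega) h
        omega
    have hub : ∀ n, n < c → I n ≤ m - c + n := by
      have haux : ∀ j, j < c → I (c - 1 - j) ≤ m - 1 - j := by
        intro j
        induction j with
        | zero => intro h; have := hlt (c - 1 - 0) (by omega); omega
        | succ k ih =>
          intro h
          have h1 := ih (by omega)
          have h2 := hsm (c - 1 - (k+1)) (c - 1 - k) (by omega) (by omega)
          omega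
      intro n h
      have := haux (c - 1 - n) (by omega)
      have h2 : c - 1 - (c - 1 - n) = n := by omega
      rw [h2] at this
      omega
    first
    | (exact fun n h => ⟨hlt n h, hlb n h, hub n h⟩)
    | (exact hsm)
    | (intro f
       have step1 : ∑ i ∈ t, f i = ∑ r : Fin c, f (e r) := by
         rw [← Finset.sum_coe_sort t f]
         exact (Equiv.sum_comp e.toEquiv (fun z : {x // x ∈ t} => f z)).symm
       have step2 : ∀ r : Fin c, f (e r) = (fun n => if h : I n < m then f ⟨I n, h⟩ else 0) (r : ℕ) := by
         intro r
         have hIr : I (r : ℕ) = ((e r : Fin m) : ℕ) := by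
           rw [hI]; simp only [dif_pos r.2]
         simp only [hIr, dif_pos (e r : Fin m).2]
       rw [step1]
       rw [Finset.sum_congr rfl (fun r _ => step2 r)]
       exact Fin.sum_univ_eq_sum_range (fun n => if h : I n < m then f ⟨I n, h⟩ else 0) c) }

noncomputable def extF {m : ℕ} (x : Fin m → ℝ) : ℕ → ℝ := fun n => if h : n < m then x ⟨n, h⟩ else 0

lemma sum_univ_extF {m : ℕ} (x : Fin m → ℝ) : ∑ i, x i = ∑ n ∈ Finset.range m, extF x n := by
  rw [← Fin.sum_univ_eq_sum_range (extF x) m]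
  exact Finset.sum_congr rfl (fun i _ => by simp [extF, i.2])

lemma sum_filter_ge_extF {m : ℕ} (x : Fin m → ℝ) (t : ℕ) :
    ∑ i ∈ Finset.univ.filter (fun i : Fin m => t ≤ (i : ℕ)), x i
      = ∑ n ∈ Finset.Ico t m, extF x n := by
  rcases Nat.eq_zero_or_pos m with rfl | hm
  · simp [Finset.Ico_eq_empty_iff]
  apply Finset.sum_nbij' (fun i : Fin m => (i : ℕ))
    (fun n => if h : n < m then (⟨n, h⟩ : Fin m) else ⟨0, hm⟩)
  · intro a ha; simp only [Finset.mem_filter] at ha; simp only [Finset.mem_Ico]; exact ⟨ha.2, a.2⟩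
  · intro n hn; simp only [Finset.mem_Ico] at hn; simp [hn.1, hn.2]
  · intro a _; simp [a.2]
  · intro n hn; simp only [Finset.mem_Ico] at hn; simp [hn.2]
  · intro a _; simp [extF, a.2]

lemma card_filter_ge {m : ℕ} (t : ℕ) (ht : t ≤ m) :
    (Finset.univ.filter (fun i : Fin m => t ≤ (i : ℕ))).card = m - t := by
  have h := sum_filter_ge_extF (fun _ : Fin m => (1 : ℝ)) t
  have h1 : ∑ i ∈ Finset.univ.filter (fun i : Fin m => t ≤ (i : ℕ)), (1:ℝ)
      = ((Finset.univ.filter (fun i : Fin m => t ≤ (i : ℕ))).card : ℝ) := by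
    simp
  have h2 : ∑ n ∈ Finset.Ico t m, extF (fun _ : Fin m => (1:ℝ)) n = ((m - t : ℕ) : ℝ) := by
    rw [Finset.sum_congr rfl (fun n hn => by
      simp only [Finset.mem_Ico] at hn; simp [extF, hn.2] : ∀ n ∈ Finset.Ico t m,
        extF (fun _ : Fin m => (1:ℝ)) n = 1)]
    simp [Nat.card_Ico]
  rw [h1, h2] at h
  exact_mod_cast h

lemma sumFinsetLe {m : ℕ} (x : Fin m → ℝ) (hx : Monotone x) (u : Finset (Fin m)) :
    ∑ i ∈ u, x i ≤ ∑ n ∈ Finset.Ico (m - u.card) m, extF x n := by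
  obtain ⟨I, hbnd, _, hsum⟩ := enumFinset u
  have hcm : u.card ≤ m := by
    have := Finset.card_le_univ u; simpa using this
  rw [hsum x]
  have step : ∀ n ∈ Finset.range u.card,
      (if h : I n < m then x ⟨I n, h⟩ else 0) ≤ extF x (m - u.card + n) := by
    intro n hn
    rw [Finset.mem_range] at hn
    obtain ⟨h1, h2, h3⟩ := hbnd n hn
    have hlt : m - u.card + n < m := by omega
    rw [dif_pos h1]
    simp only [extF, dif_pos hlt]
    exact hx (by exact_mod_cast (by omega : I n ≤ m - u.card + n))
  calc ∑ n ∈ Finset.range u.card, (if h : I n < m then x ⟨I n, h⟩ else 0)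
      ≤ ∑ n ∈ Finset.range u.card, extF x (m - u.card + n) := Finset.sum_le_sum step
    _ = ∑ n ∈ Finset.Ico (m - u.card) m, extF x n := by
        rw [Finset.sum_Ico_eq_sum_range]
        have he : m - (m - u.card) = u.card := by omega
        rw [he]

lemma maj_sorted {m : ℕ} (v w : Fin m → ℝ) (hvw : Maj v w) :
    ∃ (x y : Fin m → ℝ) (π ρ : Equiv.Perm (Fin m)),
      Monotone x ∧ Monotone y ∧ (∀ i, x i = v (π i)) ∧ (∀ i, y i = w (ρ i)) ∧
      (∀ t, t ≤ m → ∑ n ∈ Finset.range t, extF x n ≤ ∑ n ∈ Finset.range t, extF y n) ∧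
      ∑ i, x i = ∑ i, y i := by
  classical
  set π := Tuple.sort v
  set ρ := Tuple.sort w
  set x := v ∘ π with hxdef
  set y := w ∘ ρ with hydef
  have hx : Monotone x := Tuple.monotone_sort v
  have hy : Monotone y := Tuple.monotone_sort w
  have htotx : ∑ i, x i = ∑ i, v i := Equiv.sum_comp π v
  have htoty : ∑ i, y i = ∑ i, w i := Equiv.sum_comp ρ w
  have htot : ∑ i, x i = ∑ i, y i := by rw [htotx, htoty]; exact hvw.2
  refine ⟨x, y, π, ρ, hx, hy, fun i => rfl, fun i => rfl, ?_, htot⟩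
  intro t ht
  -- suffix inequality
  have hsuf : ∑ n ∈ Finset.Ico t m, extF y n ≤ ∑ n ∈ Finset.Ico t m, extF x n := by
    set F := Finset.univ.filter (fun i : Fin m => t ≤ (i : ℕ)) with hF
    have h1 : ∑ n ∈ Finset.Ico t m, extF y n = ∑ i ∈ F, y i := (sum_filter_ge_extF y t).symm
    have h2 : ∑ i ∈ F.image ρ, w i = ∑ i ∈ F, y i := by
      rw [Finset.sum_image (fun a _ b _ h => ρ.injective h)]
      rfl
    have hcard : (F.image ρ).card = m - t := by
      rw [Finset.card_image_of_injective _ ρ.injective, hF, card_filter_ge t ht]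
    obtain ⟨t', ht'c, hle⟩ := hvw.1 (F.image ρ)
    have h3 : ∑ i ∈ t', v i = ∑ j ∈ t'.image π.symm, x j := by
      rw [Finset.sum_image (fun a _ b _ h => π.symm.injective h)]
      apply Finset.sum_congr rfl
      intro i _
      simp [hxdef]
    have hc2 : (t'.image π.symm).card = m - t := by
      rw [Finset.card_image_of_injective _ π.symm.injective, ht'c, hcard]
    have h4 := sumFinsetLe x hx (t'.image π.symm)
    rw [hc2] at h4
    have hmm : m - (m - t) = t := by omega
    rw [hmm] at h4
    calc ∑ n ∈ Finset.Ico t m, extF y n = ∑ i ∈ F, y i := h1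
      _ = ∑ i ∈ F.image ρ, w i := h2.symm
      _ ≤ ∑ i ∈ t', v i := hle
      _ = ∑ j ∈ t'.image π.symm, x j := h3
      _ ≤ ∑ n ∈ Finset.Ico t m, extF x n := h4
  have hsplitx := Finset.sum_range_add_sum_Ico (extF x) ht
  have hsplity := Finset.sum_range_add_sum_Ico (extF y) ht
  have htx : ∑ n ∈ Finset.range m, extF x n = ∑ n ∈ Finset.range m, extF y n := by
    rw [← sum_univ_extF, ← sum_univ_extF]; exact htot
  linarith
lemma keyK {m : ℕ} {A : Set ℝ} {g : ℝ → ℝ} (hg : ConvexOn ℝ A g)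
    (x y : Fin m → ℝ) (hx : Monotone x) (hy : Monotone y)
    (hxA : ∀ i, x i ∈ A) (hyA : ∀ i, y i ∈ A)
    (hpre : ∀ t, t ≤ m → ∑ n ∈ Finset.range t, extF x n ≤ ∑ n ∈ Finset.range t, extF y n)
    (htot : ∑ i, x i = ∑ i, y i)
    (s : Finset (Fin m)) :
    ∃ p : Finset (Fin m), p.card = s.card ∧ ∑ i ∈ s, g (y i) ≤ ∑ j ∈ p, g (x j) := by
  classical
  set k := s.card with hk
  have hkm : k ≤ m := by have := Finset.card_le_univ s; simpa [hk] using this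
  obtain ⟨I, hbnd, hsm, hsum⟩ := enumFinset s
  rw [← hk] at hbnd hsm hsum
  set P : Finset ℝ := (Finset.univ.image x) ∪ (Finset.univ.image y) with hPdef
  have hP : ∀ p ∈ P, p ∈ A := by
    intro p hp
    rw [hPdef, Finset.mem_union] at hp
    rcases hp with hp | hp <;> rw [Finset.mem_image] at hp <;> obtain ⟨i, _, rfl⟩ := hp
    · exact hxA i
    · exact hyA i
  have hxP : ∀ n, n < m → extF x n ∈ P := by
    intro n hn
    rw [hPdef, Finset.mem_union]
    exact Or.inl (Finset.mem_image.2 ⟨⟨n, hn⟩, Finset.mem_univ _, by simp [extF, hn]⟩)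
  have hyP : ∀ n, n < m → extF y n ∈ P := by
    intro n hn
    rw [hPdef, Finset.mem_union]
    exact Or.inr (Finset.mem_image.2 ⟨⟨n, hn⟩, Finset.mem_univ _, by simp [extF, hn]⟩)
  set aN : ℕ → ℝ := fun n => sl g P (extF y (I n)) with haN
  have aMono : ∀ n n', n ≤ n' → n' < k → aN n ≤ aN n' := by
    intro n n' hnn hn'
    rcases eq_or_lt_of_le hnn with rfl | hlt
    · exact le_refl _
    have hIn := hbnd n (by omega)
    have hIn' := hbnd n' hn'
    have hII : I n < I n' := hsm n n' hlt hn'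
    have hyy : extF y (I n) ≤ extF y (I n') := by
      simp only [extF, dif_pos hIn.1, dif_pos hIn'.1]
      exact hy (by exact_mod_cast hII.le)
    exact sl_mono hg hP (hyP _ hIn.1) (hyP _ hIn'.1) hyy
  set p' := ((Finset.range k).filter (fun n => aN n < 0)).card with hp'
  have hp'k : p' ≤ k := le_trans (Finset.card_filter_le _ _) (by simp)
  have hchar : ∀ n, n < k → (aN n < 0 ↔ n < p') := by
    intro n hn
    constructor
    · intro h
      have hsub : Finset.range (n+1) ⊆ (Finset.range k).filter (fun j => aN j < 0) := by
        intro j hj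
        rw [Finset.mem_range] at hj
        rw [Finset.mem_filter, Finset.mem_range]
        exact ⟨by omega, lt_of_le_of_lt (aMono j n (by omega) hn) h⟩
      have := Finset.card_le_card hsub
      rw [Finset.card_range] at this
      omega
    · intro hn'
      by_contra h
      push_neg at h
      have hsub : (Finset.range k).filter (fun j => aN j < 0) ⊆ Finset.range n := by
        intro j hj
        rw [Finset.mem_filter, Finset.mem_range] at hj
        rw [Finset.mem_range]
        by_contra hjn
        push_neg at hjn
        have hmono := aMono n j hjn hj.1
        linarith [hj.2]
      have := Finset.card_le_card hsub
      rw [Finset.card_range] at this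
      omega
  set SN : ℕ → ℕ := fun n => if n < p' then n else m - k + n with hSN
  have hSNlt : ∀ n, n < k → SN n < m := by
    intro n hn; rw [hSN]; by_cases h : n < p' <;> simp only [h, if_true, if_false] <;> omega
  have hSNinj : ∀ n n', n < k → n' < k → SN n = SN n' → n = n' := by
    intro n n' hn hn' h
    rw [hSN] at h
    simp only at h
    by_cases h1 : n < p' <;> by_cases h2 : n' < p' <;> simp only [h1, h2, if_true, if_false] at h <;> omega
  set σ : Fin k → Fin m := fun r => ⟨SN r, hSNlt r r.2⟩ with hσ
  have hσinj : Function.Injective σ := by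
    intro r r' h
    have : SN r = SN r' := congrArg Fin.val h
    exact Fin.ext (hSNinj r r' r.2 r'.2 this)
  refine ⟨Finset.image σ Finset.univ, ?_, ?_⟩
  · rw [Finset.card_image_of_injective _ hσinj, Finset.card_univ, Fintype.card_fin]
  -- rewrite both sums to range k form
  have hLHS : ∑ i ∈ s, g (y i) = ∑ n ∈ Finset.range k, g (extF y (I n)) := by
    rw [hsum (fun i => g (y i))]
    apply Finset.sum_congr rfl
    intro n hn
    rw [Finset.mem_range] at hn
    have h1 := (hbnd n hn).1
    rw [dif_pos h1]
    simp [extF, h1]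
  have hRHS : ∑ j ∈ Finset.image σ Finset.univ, g (x j)
      = ∑ n ∈ Finset.range k, g (extF x (SN n)) := by
    rw [Finset.sum_image (fun a _ b _ h => hσinj h)]
    rw [← Fin.sum_univ_eq_sum_range (fun n => g (extF x (SN n))) k]
    apply Finset.sum_congr rfl
    intro r _
    have h1 := hSNlt r r.2
    simp [hσ, extF, h1]
  rw [hLHS, hRHS]
  set d : ℕ → ℝ := fun n => extF y (I n) - extF x (SN n) with hd
  have hterm : ∀ n ∈ Finset.range k, g (extF y (I n)) - g (extF x (SN n)) ≤ aN n * d n := by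
    intro n hn
    rw [Finset.mem_range] at hn
    have h1 := sl_minorant hg hP (hxP (SN n) (hSNlt n hn)) (c := extF y (I n))
    rw [haN, hd]
    simp only
    nlinarith [h1]
  have habel : ∑ n ∈ Finset.range k, aN n * d n ≤ 0 := by
    rw [← Finset.sum_range_add_sum_Ico (fun n => aN n * d n) hp'k]
    have part1 : ∑ n ∈ Finset.range p', aN n * d n ≤ 0 := by
      apply abelNeg p' aN d
      · intro i j hij hj; exact aMono i j hij (by omega)
      · intro i hi; exact ((hchar i (by omega)).2 hi).le
      · intro t ht
        have hdr : ∀ r ∈ Finset.range t, d r = extF y (I r) - extF x r := by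
          intro r hr
          rw [Finset.mem_range] at hr
          have : SN r = r := by rw [hSN]; simp only [if_pos (by omega : r < p')]
          rw [hd]; simp only [this]
        rw [Finset.sum_congr rfl hdr, Finset.sum_sub_distrib]
        have hyy : ∑ r ∈ Finset.range t, extF y r ≤ ∑ r ∈ Finset.range t, extF y (I r) := by
          apply Finset.sum_le_sum
          intro r hr
          rw [Finset.mem_range] at hr
          have hb := hbnd r (by omega)
          simp only [extF, dif_pos hb.1, dif_pos (show r < m by omega)]
          exact hy (by exact_mod_cast hb.2.1)
        have hxy := hpre t (by omega)
        linarith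
    have part2 : ∑ n ∈ Finset.Ico p' k, aN n * d n ≤ 0 := by
      rw [Finset.sum_Ico_eq_sum_range]
      apply abelPos (k - p') (fun j => aN (p' + j)) (fun j => d (p' + j))
      · intro i j hij hj; exact aMono (p' + i) (p' + j) (by omega) (by omega)
      · intro i hi
        have := hchar (p' + i) (by omega)
        by_contra hneg
        push_neg at hneg
        have := this.1 hneg
        omega
      · intro t ht
        have hre : ∑ r ∈ Finset.Ico t (k - p'), d (p' + r) = ∑ n ∈ Finset.Ico (p' + t) k, d n := by
          rw [Finset.sum_Ico_eq_sum_range, Finset.sum_Ico_eq_sum_range]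
          have he : k - p' - t = k - (p' + t) := by omega
          rw [he]
          apply Finset.sum_congr rfl
          intro j _
          congr 1
          omega
        rw [hre]
        set u := p' + t with hu
        have hup : p' ≤ u := by omega
        have huk : u ≤ k := by omega
        have hstep : ∀ n ∈ Finset.Ico u k, d n ≤ extF y (m - k + n) - extF x (m - k + n) := by
          intro n hn
          rw [Finset.mem_Ico] at hn
          have hb := hbnd n (by omega)
          have hSNn : SN n = m - k + n := by rw [hSN]; simp only [if_neg (by omega : ¬ n < p')]
          rw [hd]
          simp only [hSNn]
          have hyy : extF y (I n) ≤ extF y (m - k + n) := by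
            simp only [extF, dif_pos hb.1, dif_pos (show m - k + n < m by omega)]
            exact hy (by exact_mod_cast hb.2.2)
          linarith
        calc ∑ n ∈ Finset.Ico u k, d n
            ≤ ∑ n ∈ Finset.Ico u k, (extF y (m - k + n) - extF x (m - k + n)) :=
              Finset.sum_le_sum hstep
          _ = ∑ n ∈ Finset.Ico (m - k + u) m, (extF y n - extF x n) := by
              rw [Finset.sum_Ico_eq_sum_range, Finset.sum_Ico_eq_sum_range]
              have he : k - u = m - (m - k + u) := by omega
              rw [he]
              apply Finset.sum_congr rfl
              intro j _
              congr 2 <;> omega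
          _ ≤ 0 := by
              have hsplit := Finset.sum_range_add_sum_Ico (fun n => extF y n - extF x n)
                (show m - k + u ≤ m by omega)
              have htots : ∑ n ∈ Finset.range m, (extF y n - extF x n) = 0 := by
                rw [Finset.sum_sub_distrib, ← sum_univ_extF, ← sum_univ_extF]
                rw [htot]; ring
              have hpr := hpre (m - k + u) (by omega)
              have hpr2 : 0 ≤ ∑ n ∈ Finset.range (m - k + u), (extF y n - extF x n) := by
                rw [Finset.sum_sub_distrib]; linarith
              linarith
    linarith
  calc ∑ n ∈ Finset.range k, g (extF y (I n))
      ≤ ∑ n ∈ Finset.range k, (g (extF x (SN n)) + aN n * d n) := by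
        apply Finset.sum_le_sum
        intro n hn
        have := hterm n hn
        linarith
    _ = ∑ n ∈ Finset.range k, g (extF x (SN n)) + ∑ n ∈ Finset.range k, aN n * d n := by
        rw [Finset.sum_add_distrib]
    _ ≤ ∑ n ∈ Finset.range k, g (extF x (SN n)) := by linarith
lemma keyL {m : ℕ} {A : Set ℝ} {g : ℝ → ℝ} (hg : ConvexOn ℝ A g)
    (v w : Fin m → ℝ) (hv : ∀ i, v i ∈ A) (hw : ∀ i, w i ∈ A) (hvw : Maj v w)
    (s : Finset (Fin m)) :
    ∃ p : Finset (Fin m), p.card = s.card ∧ ∑ i ∈ s, g (w i) ≤ ∑ j ∈ p, g (v j) := by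
  classical
  obtain ⟨x, y, π, ρ, hx, hy, hxv, hyw, hpre, htot⟩ := maj_sorted v w hvw
  have hxA : ∀ i, x i ∈ A := fun i => (hxv i) ▸ hv (π i)
  have hyA : ∀ i, y i ∈ A := fun i => (hyw i) ▸ hw (ρ i)
  obtain ⟨p, hpc, hple⟩ := keyK hg x y hx hy hxA hyA hpre htot (s.image ρ.symm)
  refine ⟨p.image π, ?_, ?_⟩
  · rw [Finset.card_image_of_injective _ π.injective, hpc,
      Finset.card_image_of_injective _ ρ.symm.injective]
  · have h1 : ∑ i ∈ s.image ρ.symm, g (y i) = ∑ i ∈ s, g (w i) := by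
      rw [Finset.sum_image (fun a _ b _ h => ρ.symm.injective h)]
      apply Finset.sum_congr rfl
      intro i _
      rw [hyw]
      simp
    have h2 : ∑ j ∈ p.image π, g (v j) = ∑ j ∈ p, g (x j) := by
      rw [Finset.sum_image (fun a _ b _ h => π.injective h)]
      apply Finset.sum_congr rfl
      intro j _
      rw [hxv]
    rw [← h1, h2]
    exact hple


/-- The map `v ↦ (t + g(v₁), …, t + g(v_m), t - g(v₁), …, t - g(v_m))` is strictly
isotone with respect to majorization when `g` is convex and non-negative on a convex set. -/
theorem stmt11 {m : ℕ} (A : Set ℝ) (hA : Convex ℝ A)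
    (g : ℝ → ℝ) (hg : ConvexOn ℝ A g) (hg0 : ∀ x ∈ A, 0 ≤ g x)
    (t : ℝ) (v w : Fin m → ℝ) (hv : ∀ i, v i ∈ A) (hw : ∀ i, w i ∈ A)
    (hvw : Maj v w) :
    Maj (Sum.elim (fun i : Fin m => t + g (v i)) (fun i : Fin m => t - g (v i)))
        (Sum.elim (fun i : Fin m => t + g (w i)) (fun i : Fin m => t - g (w i))) := by
  classical
  have hgv0 : ∀ i, 0 ≤ g (v i) := fun i => hg0 _ (hv i)
  have hgw0 : ∀ i, 0 ≤ g (w i) := fun i => hg0 _ (hw i)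
  constructor
  · -- main part
    intro s
    set s1 := s.toLeft with hs1
    set s2 := s.toRight with hs2
    have hsds : s1.disjSum s2 = s := Finset.toLeft_disjSum_toRight
    have hcard : s1.card + s2.card = s.card := Finset.card_toLeft_add_card_toRight
    set k := s.card with hkdef
    have hs1m : s1.card ≤ m := by simpa using Finset.card_le_univ s1
    have hs2m : s2.card ≤ m := by simpa using Finset.card_le_univ s2
    -- bound on the w-sum
    have hLHS : ∑ i ∈ s, Sum.elim (fun i : Fin m => t + g (w i)) (fun i : Fin m => t - g (w i)) i
        = (s1.card : ℝ) * t + ∑ i ∈ s1, g (w i) + ((s2.card : ℝ) * t - ∑ i ∈ s2, g (w i)) := by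
      rw [← hsds, Finset.sum_sumElim, Finset.sum_add_distrib, Finset.sum_sub_distrib]
      simp [Finset.sum_const, mul_comm]
    have hbound1 : ∑ i ∈ s1, g (w i) - ∑ i ∈ s2, g (w i) ≤ ∑ i ∈ s1 \ s2, g (w i) := by
      have e1 : ∑ i ∈ s1 ∩ s2, g (w i) + ∑ i ∈ s1 \ s2, g (w i) = ∑ i ∈ s1, g (w i) :=
        Finset.sum_inter_add_sum_sdiff s1 s2 _
      have e2 : ∑ i ∈ s1 ∩ s2, g (w i) ≤ ∑ i ∈ s2, g (w i) :=
        Finset.sum_le_sum_of_subset_of_nonneg (Finset.inter_subset_right)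
          (fun i _ _ => hgw0 i)
      linarith
    obtain ⟨p, hpc, hple⟩ := keyL hg v w hv hw hvw (s1 \ s2)
    set a := (s1 \ s2).card with hadef
    rw [hadef] at hpc
    by_cases hkm : k ≤ m
    · -- use only left entries
      have hak : a ≤ k := by
        have := Finset.card_le_card (Finset.sdiff_subset : s1 \ s2 ⊆ s1)
        omega
      obtain ⟨q, hpq, _, hqc⟩ := Finset.exists_subsuperset_card_eq (n := k)
        (Finset.subset_univ p) (by rw [hpc]; exact hak) (by simpa using hkm)
      refine ⟨q.map ⟨Sum.inl, Sum.inl_injective⟩, ?_, ?_⟩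
      · rw [Finset.card_map, hqc]
      · have hRHS : ∑ i ∈ q.map ⟨Sum.inl, Sum.inl_injective⟩,
            Sum.elim (fun i : Fin m => t + g (v i)) (fun i : Fin m => t - g (v i)) i
            = (k : ℝ) * t + ∑ i ∈ q, g (v i) := by
          rw [Finset.sum_map]
          simp only [Function.Embedding.coeFn_mk, Sum.elim_inl]
          rw [Finset.sum_add_distrib]
          simp [Finset.sum_const, hqc, mul_comm]
        have hq1 : ∑ i ∈ p, g (v i) ≤ ∑ i ∈ q, g (v i) :=
          Finset.sum_le_sum_of_subset_of_nonneg hpq (fun i _ _ => hgv0 i)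
        rw [hLHS, hRHS]
        have hcast : (s1.card : ℝ) + (s2.card : ℝ) = (k : ℝ) := by exact_mod_cast hcard
        have hct : ((s1.card : ℝ) + (s2.card : ℝ)) * t = (k : ℝ) * t := by rw [hcast]
        nlinarith [hple, hbound1, hq1, hct]
    · -- use all left entries and complement on the right
      push_neg at hkm
      have hk2m : k ≤ 2 * m := by
        have := Finset.card_le_univ s
        simp only [Finset.card_univ, Fintype.card_sum, Fintype.card_fin] at this
        omega
      set r := k - m with hr
      have hrs2 : r ≤ s2.card := by omega
      have haq : a ≤ m - r := by
        have hdisj : Disjoint (s1 \ s2) s2 := Finset.sdiff_disjoint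
        have := Finset.card_le_univ ((s1 \ s2) ∪ s2)
        rw [Finset.card_union_of_disjoint hdisj] at this
        simp only [Finset.card_univ, Fintype.card_fin] at this
        omega
      obtain ⟨q, hpq, _, hqc⟩ := Finset.exists_subsuperset_card_eq (n := m - r)
        (Finset.subset_univ p) (by rw [hpc]; exact haq)
        (by simp only [Finset.card_univ, Fintype.card_fin]; omega)
      have hdisjT : Disjoint (Finset.univ.map ⟨Sum.inl, Sum.inl_injective⟩)
          ((Finset.univ \ q).map ⟨Sum.inr, Sum.inr_injective⟩ :
            Finset (Fin m ⊕ Fin m)) := by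
        rw [Finset.disjoint_left]
        intro z hz hz'
        rw [Finset.mem_map] at hz hz'
        obtain ⟨i, _, rfl⟩ := hz
        obtain ⟨j, _, hj⟩ := hz'
        simp at hj
      refine ⟨Finset.univ.map ⟨Sum.inl, Sum.inl_injective⟩ ∪
        (Finset.univ \ q).map ⟨Sum.inr, Sum.inr_injective⟩, ?_, ?_⟩
      · rw [Finset.card_union_of_disjoint hdisjT, Finset.card_map, Finset.card_map,
          Finset.card_sdiff_of_subset (Finset.subset_univ q), hqc]
        simp only [Finset.card_univ, Fintype.card_fin]
        omega
      · rw [Finset.sum_union hdisjT, Finset.sum_map, Finset.sum_map]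
        simp only [Function.Embedding.coeFn_mk, Sum.elim_inl, Sum.elim_inr]
        have e1 : ∑ i : Fin m, (t + g (v i)) = (m : ℝ) * t + ∑ i, g (v i) := by
          rw [Finset.sum_add_distrib]
          simp [Finset.sum_const, mul_comm]
        have hcdq : (Finset.univ \ q).card = r := by
          rw [Finset.card_sdiff_of_subset (Finset.subset_univ q), hqc]
          simp only [Finset.card_univ, Fintype.card_fin]
          omega
        have e2 : ∑ i ∈ Finset.univ \ q, (t - g (v i))
            = (r : ℝ) * t - (∑ i, g (v i) - ∑ i ∈ q, g (v i)) := by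
          rw [Finset.sum_sub_distrib, Finset.sum_const, hcdq,
            Finset.sum_sdiff_eq_sub (Finset.subset_univ q), nsmul_eq_mul]
        rw [hLHS, e1, e2]
        have hq1 : ∑ i ∈ p, g (v i) ≤ ∑ i ∈ q, g (v i) :=
          Finset.sum_le_sum_of_subset_of_nonneg hpq (fun i _ _ => hgv0 i)
        have hcast : (s1.card : ℝ) + (s2.card : ℝ) = (k : ℝ) := by exact_mod_cast hcard
        have hcast2 : (m : ℝ) + (r : ℝ) = (k : ℝ) := by
          have : m + r = k := by omega
          exact_mod_cast this
        have hct : ((s1.card : ℝ) + (s2.card : ℝ)) * t = ((m : ℝ) + (r : ℝ)) * t := by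
          rw [hcast, hcast2]
        nlinarith [hple, hbound1, hq1, hct]
  · -- totals
    have htotal : ∀ z : Fin m → ℝ,
        ∑ i, Sum.elim (fun i : Fin m => t + g (z i)) (fun i : Fin m => t - g (z i)) i
          = 2 * (m : ℝ) * t := by
      intro z
      rw [Fintype.sum_sum_type]
      simp only [Sum.elim_inl, Sum.elim_inr]
      rw [Finset.sum_add_distrib, Finset.sum_sub_distrib]
      simp [Finset.sum_const]
      ring
    rw [htotal v, htotal w]
end

section
/- Let $\mathcal{W}$ be a partition of $[n]$ and for each $I\in\mathcal{W}$ let $f_I:\mathcal{D}(\mathcal{H}_I)\to\mathbb{R}$ be continuous, convex, and unitarily invariant. For any probability vector $p$, the maximization of $\sum_{I\in\mathcal{W}} f_I(\tau_I)$ over states $\tau_{[n]}\in\mathcal{D}(\mathcal{H}_{[n]})$ with $\lambda(\tau_{[n]})\preceq p$ admits an optimal point that is diagonal in a fixed product basis (a classical state). -/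
open Matrix
open scoped ComplexOrder

/-- Partial trace onto the systems in `I`. -/
noncomputable def ptr {n : ℕ} (d : Fin n → ℕ) (I : Finset (Fin n))
    (τ : Matrix ((i : Fin n) → Fin (d i)) ((i : Fin n) → Fin (d i)) ℂ) :
    Matrix ((i : {i // i ∈ I}) → Fin (d i.1)) ((i : {i // i ∈ I}) → Fin (d i.1)) ℂ :=
  Matrix.of fun a b => ∑ c : (j : {j // j ∉ I}) → Fin (d j.1),
    τ (fun i => if h : i ∈ I then a ⟨i, h⟩ else c ⟨i, h⟩)
      (fun i => if h : i ∈ I then b ⟨i, h⟩ else c ⟨i, h⟩)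

section MajLemmas

lemma Maj.trans' {ι : Type*} [Fintype ι] {x y z : ι → ℝ} (h1 : Maj x y) (h2 : Maj y z) :
    Maj x z := by
  refine ⟨fun s => ?_, h1.2.trans h2.2⟩
  obtain ⟨t, ht, hle⟩ := h2.1 s
  obtain ⟨u, hu, hle'⟩ := h1.1 t
  exact ⟨u, hu.trans ht, hle.trans hle'⟩

lemma maj_refl {ι : Type*} [Fintype ι] (x : ι → ℝ) : Maj x x :=
  ⟨fun s => ⟨s, rfl, le_refl _⟩, rfl⟩

/-- existence of a "top-k" set -/
lemma topk_exists {ι : Type*} [Fintype ι] [DecidableEq ι] (x : ι → ℝ) (k : ℕ)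
    (hk : k ≤ Fintype.card ι) :
    ∃ t : Finset ι, t.card = k ∧ ∀ i ∈ t, ∀ j ∉ t, x j ≤ x i := by
  induction k with
  | zero => exact ⟨∅, rfl, by simp⟩
  | succ m ih =>
    obtain ⟨t, htc, htp⟩ := ih (le_of_lt (Nat.lt_of_lt_of_le (Nat.lt_succ_self m) hk))
    have hne : tᶜ.Nonempty := by
      rw [← Finset.card_pos, Finset.card_compl, htc]
      omega
    obtain ⟨j0, hj0, hj0max⟩ := Finset.exists_max_image tᶜ x hne
    refine ⟨insert j0 t, ?_, ?_⟩
    · rw [Finset.card_insert_of_notMem (Finset.mem_compl.mp hj0), htc]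
    · intro i hi j hj
      have hjt : j ∉ t := fun hjt => hj (Finset.mem_insert_of_mem hjt)
      rcases Finset.mem_insert.mp hi with h | h
      · subst h; exact hj0max j (Finset.mem_compl.mpr hjt)
      · exact htp i h j hjt

lemma maj_of_doublyStochastic {ι : Type*} [Fintype ι] [DecidableEq ι]
    (B : ι → ι → ℝ) (hB0 : ∀ i j, 0 ≤ B i j)
    (hrow : ∀ i, ∑ j, B i j = 1) (hcol : ∀ j, ∑ i, B i j = 1)
    (x y : ι → ℝ) (hy : ∀ i, y i = ∑ j, B i j * x j) : Maj x y := by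
  constructor
  · intro s
    set c : ι → ℝ := fun j => ∑ i ∈ s, B i j with hc
    have hc0 : ∀ j, 0 ≤ c j := fun j => Finset.sum_nonneg fun i _ => hB0 i j
    have hc1 : ∀ j, c j ≤ 1 := by
      intro j
      calc c j ≤ ∑ i, B i j :=
            Finset.sum_le_sum_of_subset_of_nonneg (Finset.subset_univ s) (fun i _ _ => hB0 i j)
        _ = 1 := hcol j
    have hcs : ∑ j, c j = (s.card : ℝ) := by
      rw [hc]
      rw [Finset.sum_comm]
      simp only [hrow]
      simp
    obtain ⟨t, htc, htp⟩ := topk_exists x s.card (Finset.card_le_univ s)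
    refine ⟨t, htc, ?_⟩
    have hsy : ∑ i ∈ s, y i = ∑ j, c j * x j := by
      simp only [hy, hc]
      rw [Finset.sum_comm]
      simp [Finset.sum_mul]
    rw [hsy]
    rcases Finset.eq_empty_or_nonempty t with h | h
    · subst h
      simp only [Finset.card_empty] at htc
      have : ∀ j, c j = 0 := by
        intro j
        have := (Finset.sum_eq_zero_iff_of_nonneg (fun j _ => hc0 j)).mp (by rw [hcs, ← htc]; simp)
        exact this j (Finset.mem_univ j)
      simp [this]
    · obtain ⟨i0, hi0, hi0min⟩ := Finset.exists_min_image t x h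
      have key : ∀ j, c j * x j ≤ c j * x i0 + (if j ∈ t then x j - x i0 else 0) := by
        intro j
        by_cases hj : j ∈ t
        · simp only [hj, if_pos]
          have h1 : x i0 ≤ x j := hi0min j hj
          nlinarith [hc1 j, hc0 j]
        · simp only [hj, if_neg, not_false_iff]
          have h1 : x j ≤ x i0 := htp i0 hi0 j hj
          nlinarith [hc0 j]
      calc ∑ j, c j * x j ≤ ∑ j, (c j * x i0 + (if j ∈ t then x j - x i0 else 0)) :=
            Finset.sum_le_sum fun j _ => key j
        _ = (∑ j, c j) * x i0 + ∑ j ∈ t, (x j - x i0) := by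
            rw [Finset.sum_add_distrib, ← Finset.sum_mul]
            congr 1
            rw [Finset.sum_ite_mem]
            simp
        _ = ∑ j ∈ t, x j := by
            rw [hcs, ← htc, Finset.sum_sub_distrib, Finset.sum_const, htc]
            ring
  · have : ∑ i, y i = ∑ j, (∑ i, B i j) * x j := by
      simp only [hy]
      rw [Finset.sum_comm]
      simp [Finset.sum_mul]
    rw [this]
    simp [hcol]

/-- Generalized Schur: diag entries of `V * diagonal r * Vᴴ` are majorized by `r`. -/
lemma maj_diag_of_unitary_conj {ι : Type*} [Fintype ι] [DecidableEq ι]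
    (V : Matrix ι ι ℂ) (hV : V ∈ Matrix.unitaryGroup ι ℂ) (r : ι → ℝ)
    (A : Matrix ι ι ℂ) (hA : A = V * Matrix.diagonal (fun j => (r j : ℂ)) * Vᴴ) :
    Maj r (fun i => (A i i).re) := by
  have hrow : ∀ i, ∑ j, Complex.normSq (V i j) = 1 := by
    intro i
    have h := Matrix.mem_unitaryGroup_iff.mp hV
    have h1 := congrFun (congrFun h i) i
    rw [Matrix.mul_apply] at h1
    simp only [Matrix.star_apply, RCLike.star_def, Matrix.one_apply_eq] at h1
    have h2 : (∑ j, (Complex.normSq (V i j) : ℂ)) = 1 := by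
      rw [← h1]
      congr 1; funext j
      rw [Complex.mul_conj]
    exact_mod_cast h2
  have hcol : ∀ j, ∑ i, Complex.normSq (V i j) = 1 := by
    intro j
    have h := Matrix.mem_unitaryGroup_iff'.mp hV
    have h1 := congrFun (congrFun h j) j
    rw [Matrix.mul_apply] at h1
    simp only [Matrix.star_apply, RCLike.star_def, Matrix.one_apply_eq] at h1
    have h2 : (∑ i, (Complex.normSq (V i j) : ℂ)) = 1 := by
      rw [← h1]
      congr 1; funext i
      rw [mul_comm, Complex.mul_conj]
    exact_mod_cast h2
  apply maj_of_doublyStochastic (fun i j => Complex.normSq (V i j))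
    (fun i j => Complex.normSq_nonneg _) hrow hcol
  intro i
  have hAe : A i i = ∑ j, (Complex.normSq (V i j) : ℂ) * (r j : ℂ) := by
    rw [hA]
    rw [Matrix.mul_apply]
    rw [Finset.sum_congr rfl (fun k _ => by rw [Matrix.mul_apply])]
    simp only [Matrix.conjTranspose_apply, Matrix.diagonal_apply, RCLike.star_def]
    rw [Finset.sum_congr rfl (fun k _ => by
      rw [show (∑ x, V i x * if x = k then ((r x : ℂ)) else 0) = V i k * (r k : ℂ) by
        rw [Finset.sum_eq_single k (fun b _ hb => by simp [hb]) (by simp)]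
        simp])]
    congr 1; funext k
    rw [← Complex.mul_conj]
    ring
  rw [hAe]
  rw [Complex.re_sum]
  congr 1; funext j
  simp

lemma sum_prod_blocks {ι β : Type*} [Fintype ι] [DecidableEq ι] [Fintype β] [DecidableEq β]
    {κ : ι → Type*} [∀ i, Fintype (κ i)]
    (S : β → Finset ι) (hd : ∀ b b', b ≠ b' → Disjoint (S b) (S b'))
    (hc : ∀ i, ∃ b, i ∈ S b) (F : (b : β) → ((j : {j // j ∈ S b}) → κ j.1) → ℂ) :
    ∑ x : ((i : ι) → κ i), ∏ b, F b (fun j => x j.1)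
      = ∏ b, ∑ a : ((j : {j // j ∈ S b}) → κ j.1), F b a := by
  classical
  have hmem : ∀ i, i ∈ S ((hc i).choose) := fun i => (hc i).choose_spec
  set blk : ι → β := fun i => (hc i).choose with hblkdef
  have huniq : ∀ (i : ι) (b : β), i ∈ S b → b = blk i := by
    intro i b hib
    by_contra hne
    exact (Finset.disjoint_left.mp (hd b (blk i) hne) hib) (hmem i)
  let Φ : ((i : ι) → κ i) ≃ ((b : β) → (j : {j // j ∈ S b}) → κ j.1) :=
    { toFun := fun x b j => x j.1
      invFun := fun g i => g (blk i) ⟨i, hmem i⟩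
      left_inv := fun x => funext fun i => rfl
      right_inv := by
        intro g
        funext b j
        obtain ⟨j, hj⟩ := j
        have hb : blk j = b := (huniq j b hj).symm
        subst hb
        rfl }
  have hterm : ∀ (g : (b : β) → (j : {j // j ∈ S b}) → κ j.1) (b : β),
      (fun (j : {j // j ∈ S b}) => Φ.symm g j.1) = g b := by
    intro g b
    funext j
    obtain ⟨j, hj⟩ := j
    have hb : blk j = b := (huniq j b hj).symm
    subst hb
    rfl
  rw [← Equiv.sum_comp Φ.symm (fun x => ∏ b, F b (fun j => x j.1))]
  rw [Finset.sum_congr rfl (fun g _ => Finset.prod_congr rfl (fun b _ => by rw [hterm g b]))]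
  exact (Fintype.prod_sum F).symm

end MajLemmas

namespace Stmt16Aux

variable {n : ℕ} (d : Fin n → ℕ)

def res (I : Finset (Fin n)) (x : (i : Fin n) → Fin (d i)) :
    (i : {i // i ∈ I}) → Fin (d i.1) := fun i => x i.1

def resC (I : Finset (Fin n)) (x : (i : Fin n) → Fin (d i)) :
    (j : {j // j ∉ I}) → Fin (d j.1) := fun j => x j.1

def mrg (I : Finset (Fin n)) (a : (i : {i // i ∈ I}) → Fin (d i.1))
    (c : (j : {j // j ∉ I}) → Fin (d j.1)) : (i : Fin n) → Fin (d i) :=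
  fun i => if h : i ∈ I then a ⟨i, h⟩ else c ⟨i, h⟩

variable {I : Finset (Fin n)}

lemma ptr_apply (τ) (a b : (i : {i // i ∈ I}) → Fin (d i.1)) :
    ptr d I τ a b = ∑ c : (j : {j // j ∉ I}) → Fin (d j.1),
      τ (mrg d I a c) (mrg d I b c) := rfl

@[simp] lemma res_mrg (a c) : res d I (mrg d I a c) = a := by
  funext i; simp [res, mrg, i.2]

@[simp] lemma resC_mrg (a c) : resC d I (mrg d I a c) = c := by
  funext j; simp [resC, mrg, j.2]

@[simp] lemma mrg_res (x) : mrg d I (res d I x) (resC d I x) = x := by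
  funext i; by_cases h : i ∈ I <;> simp [mrg, res, resC, h]

def mergeEquiv (I : Finset (Fin n)) : ((i : Fin n) → Fin (d i)) ≃
    ((i : {i // i ∈ I}) → Fin (d i.1)) × ((j : {j // j ∉ I}) → Fin (d j.1)) where
  toFun x := (res d I x, resC d I x)
  invFun p := mrg d I p.1 p.2
  left_inv x := mrg_res d x
  right_inv p := by ext1 <;> simp

lemma sum_merge {M : Type*} [AddCommMonoid M] (I : Finset (Fin n))
    (f : ((i : Fin n) → Fin (d i)) → M) :
    ∑ x, f x = ∑ a, ∑ c, f (mrg d I a c) := by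
  rw [← Equiv.sum_comp (mergeEquiv d I).symm f, Fintype.sum_prod_type]
  rfl

lemma ptr_trace (τ) : (ptr d I τ).trace = τ.trace := by
  rw [Matrix.trace, Matrix.trace]
  rw [sum_merge d I (fun x => τ.diag x)]
  exact Finset.sum_congr rfl fun a _ => rfl

lemma ptr_psd {τ} (hτ : τ.PosSemidef) : (ptr d I τ).PosSemidef := by
  obtain ⟨B, hB⟩ : ∃ B : Matrix _ _ ℂ, τ = Bᴴ * B := by
    open scoped MatrixOrder in
    exact (CStarAlgebra.nonneg_iff_eq_star_mul_self.mp hτ.nonneg).imp fun B h => h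
  have : ptr d I τ = (Matrix.of fun (p : ((i : Fin n) → Fin (d i)) ×
      ((j : {j // j ∉ I}) → Fin (d j.1))) (a : (i : {i // i ∈ I}) → Fin (d i.1)) =>
        B p.1 (mrg d I a p.2))ᴴ * (Matrix.of fun p a => B p.1 (mrg d I a p.2)) := by
    ext a b
    rw [ptr_apply]
    erw [Matrix.mul_apply]
    rw [Fintype.sum_prod_type]
    rw [Finset.sum_comm]
    refine Finset.sum_congr rfl fun c _ => ?_
    rw [hB, Matrix.mul_apply]
    refine Finset.sum_congr rfl fun x _ => ?_
    simp [Matrix.conjTranspose_apply]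
  rw [this]
  exact Matrix.posSemidef_conjTranspose_mul_self _

lemma ptr_diag (g : ((i : Fin n) → Fin (d i)) → ℂ) :
    ptr d I (Matrix.diagonal g) =
      Matrix.diagonal (fun a => ∑ c, g (mrg d I a c)) := by
  ext a b
  rw [ptr_apply]
  by_cases h : a = b
  · subst h
    simp [Matrix.diagonal_apply_eq]
  · have : ∀ c, mrg d I a c ≠ mrg d I b c := by
      intro c hc
      exact h (by rw [← res_mrg d a c, hc, res_mrg])
    simp only [Matrix.diagonal_apply]
    rw [if_neg h]
    exact Finset.sum_eq_zero fun c _ => if_neg (this c)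

variable (𝒲 : Finset (Finset (Fin n)))

noncomputable def bigU
    (U : (J : Finset (Fin n)) → Matrix ((i : {i // i ∈ J}) → Fin (d i.1))
      ((i : {i // i ∈ J}) → Fin (d i.1)) ℂ) :
    Matrix ((i : Fin n) → Fin (d i)) ((i : Fin n) → Fin (d i)) ℂ :=
  Matrix.of fun x y => ∏ J ∈ 𝒲, U J (res d J x) (res d J y)

variable {𝒲}

lemma cover_exists (hcover : 𝒲.sup id = Finset.univ) (i : Fin n) : ∃ J ∈ 𝒲, i ∈ J := by
  have h : i ∈ 𝒲.sup id := by rw [hcover]; exact Finset.mem_univ i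
  rwa [Finset.mem_sup] at h

lemma bigU_unitary (hdisj : ∀ I ∈ 𝒲, ∀ J ∈ 𝒲, I ≠ J → Disjoint I J)
    (hcover : 𝒲.sup id = Finset.univ)
    (U : (J : Finset (Fin n)) → Matrix ((i : {i // i ∈ J}) → Fin (d i.1))
      ((i : {i // i ∈ J}) → Fin (d i.1)) ℂ)
    (hU : ∀ J ∈ 𝒲, U J ∈ Matrix.unitaryGroup _ ℂ) :
    bigU d 𝒲 U ∈ Matrix.unitaryGroup _ ℂ := by
  rw [Matrix.mem_unitaryGroup_iff]
  ext x y
  rw [Matrix.mul_apply]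
  have step1 : ∀ z, bigU d 𝒲 U x z * (star (bigU d 𝒲 U)) z y
      = ∏ b : {J // J ∈ 𝒲}, (U b.1 (res d b.1 x) (res d b.1 z)
          * (starRingEnd ℂ) (U b.1 (res d b.1 y) (res d b.1 z))) := by
    intro z
    have : (star (bigU d 𝒲 U)) z y = (starRingEnd ℂ) (bigU d 𝒲 U y z) := rfl
    rw [this]
    show (∏ J ∈ 𝒲, U J (res d J x) (res d J z)) *
      (starRingEnd ℂ) (∏ J ∈ 𝒲, U J (res d J y) (res d J z)) = _
    rw [map_prod, ← Finset.prod_mul_distrib, ← Finset.prod_coe_sort]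
  rw [Finset.sum_congr rfl (fun z _ => step1 z)]
  have hd' : ∀ b b' : {J // J ∈ 𝒲}, b ≠ b' → Disjoint b.1 b'.1 := by
    intro b b' hne
    exact hdisj b.1 b.2 b'.1 b'.2 (fun h => hne (Subtype.ext h))
  have hc' : ∀ i : Fin n, ∃ b : {J // J ∈ 𝒲}, i ∈ b.1 := by
    intro i
    obtain ⟨J, hJ, hiJ⟩ := cover_exists hcover i
    exact ⟨⟨J, hJ⟩, hiJ⟩
  have key := sum_prod_blocks (κ := fun i => Fin (d i)) (fun b : {J // J ∈ 𝒲} => b.1) hd' hc'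
    (fun b asg => U b.1 (res d b.1 x) asg * (starRingEnd ℂ) (U b.1 (res d b.1 y) asg))
  refine key.trans ?_
  have factor : ∀ b : {J // J ∈ 𝒲},
      (∑ a, U b.1 (res d b.1 x) a * (starRingEnd ℂ) (U b.1 (res d b.1 y) a))
        = if res d b.1 x = res d b.1 y then 1 else 0 := by
    intro b
    have h := Matrix.mem_unitaryGroup_iff.mp (hU b.1 b.2)
    have h1 := congrFun (congrFun h (res d b.1 x)) (res d b.1 y)
    rw [Matrix.mul_apply] at h1
    simp only [Matrix.star_apply, RCLike.star_def] at h1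
    rw [h1, Matrix.one_apply]
  rw [Finset.prod_congr rfl (fun b _ => factor b)]
  by_cases h : x = y
  · subst h
    simp [Matrix.one_apply]
  · rw [Matrix.one_apply_ne h]
    have : ∃ i, x i ≠ y i := by
      by_contra hcon
      push_neg at hcon
      exact h (funext hcon)
    obtain ⟨i, hi⟩ := this
    obtain ⟨b, hib⟩ := hc' i
    refine Finset.prod_eq_zero (Finset.mem_univ b) ?_
    rw [if_neg]
    intro hres
    exact hi (congrFun hres ⟨i, hib⟩)

lemma ptr_conj (hdisj : ∀ I ∈ 𝒲, ∀ J ∈ 𝒲, I ≠ J → Disjoint I J)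
    (hcover : 𝒲.sup id = Finset.univ) (hI : I ∈ 𝒲)
    (U : (J : Finset (Fin n)) → Matrix ((i : {i // i ∈ J}) → Fin (d i.1))
      ((i : {i // i ∈ J}) → Fin (d i.1)) ℂ)
    (hU : ∀ J ∈ 𝒲, U J ∈ Matrix.unitaryGroup _ ℂ)
    (σ : Matrix ((i : Fin n) → Fin (d i)) ((i : Fin n) → Fin (d i)) ℂ) :
    ptr d I (bigU d 𝒲 U * σ * (bigU d 𝒲 U)ᴴ) = U I * ptr d I σ * (U I)ᴴ := by
  have hnotI : ∀ (b' : {J // J ∈ 𝒲.erase I}) (i : Fin n), i ∈ b'.1 → i ∉ I := by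
    intro b' i hi
    obtain ⟨hne, hmem⟩ := Finset.mem_erase.mp b'.2
    exact Finset.disjoint_left.mp (hdisj b'.1 hmem I hI hne) hi
  have hc'' : ∀ j : {j // j ∉ I}, ∃ b' : {J // J ∈ 𝒲.erase I},
      j ∈ Finset.subtype (· ∉ I) b'.1 := by
    intro j
    obtain ⟨J, hJ, hjJ⟩ := cover_exists hcover j.1
    have hne : J ≠ I := fun h => j.2 (h ▸ hjJ)
    exact ⟨⟨J, Finset.mem_erase.mpr ⟨hne, hJ⟩⟩, Finset.mem_subtype.mpr hjJ⟩
  have hd'' : ∀ b b' : {J // J ∈ 𝒲.erase I}, b ≠ b' →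
      Disjoint (Finset.subtype (· ∉ I) b.1) (Finset.subtype (· ∉ I) b'.1) := by
    intro b b' hne
    rw [Finset.disjoint_left]
    intro j hj hj'
    have h1 : j.1 ∈ b.1 := Finset.mem_subtype.mp hj
    have h2 : j.1 ∈ b'.1 := Finset.mem_subtype.mp hj'
    have hbne : b.1 ≠ b'.1 := fun h => hne (Subtype.ext h)
    exact Finset.disjoint_left.mp
      (hdisj b.1 (Finset.mem_erase.mp b.2).2 b'.1 (Finset.mem_erase.mp b'.2).2 hbne) h1 h2
  set W := bigU d 𝒲 U with hW
  have key : ∀ (a b : (i : {i // i ∈ I}) → Fin (d i.1)) (x y : (i : Fin n) → Fin (d i)),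
      ∑ c : (j : {j // j ∉ I}) → Fin (d j.1),
          W (mrg d I a c) x * (starRingEnd ℂ) (W (mrg d I b c) y)
        = U I a (res d I x) * (starRingEnd ℂ) (U I b (res d I y)) *
            (if resC d I x = resC d I y then 1 else 0) := by
    intro a b x y
    have hWexp : ∀ (a' : (i : {i // i ∈ I}) → Fin (d i.1)) (c) (z),
        W (mrg d I a' c) z = U I a' (res d I z) *
          ∏ J ∈ 𝒲.erase I, U J (res d J (mrg d I a' c)) (res d J z) := by
      intro a' c z
      show (∏ J ∈ 𝒲, U J (res d J (mrg d I a' c)) (res d J z)) = _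
      rw [← Finset.mul_prod_erase 𝒲 _ hI, res_mrg]
    have step : ∀ c, W (mrg d I a c) x * (starRingEnd ℂ) (W (mrg d I b c) y)
        = (U I a (res d I x) * (starRingEnd ℂ) (U I b (res d I y))) *
          ∏ b' : {J // J ∈ 𝒲.erase I},
            (U b'.1 (res d b'.1 (mrg d I a c)) (res d b'.1 x) *
              (starRingEnd ℂ) (U b'.1 (res d b'.1 (mrg d I b c)) (res d b'.1 y))) := by
      intro c
      rw [hWexp a c x, hWexp b c y, _root_.map_mul, map_prod]
      rw [Finset.prod_coe_sort (𝒲.erase I)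
        (fun J => U J (res d J (mrg d I a c)) (res d J x) *
          (starRingEnd ℂ) (U J (res d J (mrg d I b c)) (res d J y))),
        Finset.prod_mul_distrib]
      ring
    rw [Finset.sum_congr rfl (fun c _ => step c), ← Finset.mul_sum]
    congr 1
    have hresC : ∀ (b' : {J // J ∈ 𝒲.erase I}) (a' : (i : {i // i ∈ I}) → Fin (d i.1))
        (c : (j : {j // j ∉ I}) → Fin (d j.1)),
        res d b'.1 (mrg d I a' c)
          = fun i : {i // i ∈ b'.1} => c ⟨i.1, hnotI b' i.1 i.2⟩ := by
      intro b' a' c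
      funext i
      show mrg d I a' c i.1 = _
      rw [mrg, dif_neg (hnotI b' i.1 i.2)]
    have step2 : ∀ c : (j : {j // j ∉ I}) → Fin (d j.1),
        (∏ b' : {J // J ∈ 𝒲.erase I},
          (U b'.1 (res d b'.1 (mrg d I a c)) (res d b'.1 x) *
            (starRingEnd ℂ) (U b'.1 (res d b'.1 (mrg d I b c)) (res d b'.1 y))))
        = ∏ b' : {J // J ∈ 𝒲.erase I},
            (U b'.1 (fun i => c ⟨i.1, hnotI b' i.1 i.2⟩) (res d b'.1 x) *
              (starRingEnd ℂ) (U b'.1 (fun i => c ⟨i.1, hnotI b' i.1 i.2⟩) (res d b'.1 y))) := by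
      intro c
      refine Finset.prod_congr rfl fun b' _ => ?_
      rw [hresC b' a c, hresC b' b c]
    rw [Finset.sum_congr rfl (fun c _ => step2 c)]
    have key2 := sum_prod_blocks (κ := fun j : {j // j ∉ I} => Fin (d j.1))
      (fun b' : {J // J ∈ 𝒲.erase I} => Finset.subtype (· ∉ I) b'.1) hd'' hc''
      (fun b' asg =>
        U b'.1 (fun i => asg ⟨⟨i.1, hnotI b' i.1 i.2⟩, Finset.mem_subtype.mpr i.2⟩)
            (res d b'.1 x) *
          (starRingEnd ℂ)
            (U b'.1 (fun i => asg ⟨⟨i.1, hnotI b' i.1 i.2⟩, Finset.mem_subtype.mpr i.2⟩)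
              (res d b'.1 y)))
    refine key2.trans ?_
    have factor : ∀ b' : {J // J ∈ 𝒲.erase I},
        (∑ asg : (j : {j // j ∈ Finset.subtype (· ∉ I) b'.1}) → Fin (d j.1.1),
          U b'.1 (fun i => asg ⟨⟨i.1, hnotI b' i.1 i.2⟩, Finset.mem_subtype.mpr i.2⟩)
              (res d b'.1 x) *
            (starRingEnd ℂ)
              (U b'.1 (fun i => asg ⟨⟨i.1, hnotI b' i.1 i.2⟩, Finset.mem_subtype.mpr i.2⟩)
                (res d b'.1 y)))
        = if res d b'.1 x = res d b'.1 y then 1 else 0 := by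
      intro b'
      let eqv : ((j : {j // j ∈ Finset.subtype (· ∉ I) b'.1}) → Fin (d j.1.1)) ≃
          ((i : {i // i ∈ b'.1}) → Fin (d i.1)) :=
        { toFun := fun asg i => asg ⟨⟨i.1, hnotI b' i.1 i.2⟩, Finset.mem_subtype.mpr i.2⟩
          invFun := fun u j => u ⟨j.1.1, Finset.mem_subtype.mp j.2⟩
          left_inv := fun asg => rfl
          right_inv := fun u => rfl }
      rw [← Equiv.sum_comp eqv.symm]
      have : ∀ u : (i : {i // i ∈ b'.1}) → Fin (d i.1),
          (fun i : {i // i ∈ b'.1} =>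
            eqv.symm u ⟨⟨i.1, hnotI b' i.1 i.2⟩, Finset.mem_subtype.mpr i.2⟩) = u := by
        intro u; funext i; rfl
      rw [Finset.sum_congr rfl (fun u _ => by rw [this u])]
      have h := Matrix.mem_unitaryGroup_iff'.mp (hU b'.1 (Finset.mem_erase.mp b'.2).2)
      have h1 := congrFun (congrFun h (res d b'.1 y)) (res d b'.1 x)
      rw [Matrix.mul_apply] at h1
      simp only [Matrix.star_apply, RCLike.star_def] at h1
      rw [show (∑ u, U b'.1 u (res d b'.1 x) * (starRingEnd ℂ) (U b'.1 u (res d b'.1 y)))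
          = ∑ u, (starRingEnd ℂ) (U b'.1 u (res d b'.1 y)) * U b'.1 u (res d b'.1 x) from
        Finset.sum_congr rfl (fun u _ => mul_comm _ _)]
      rw [h1, Matrix.one_apply]
      by_cases hxy : res d b'.1 x = res d b'.1 y
      · rw [hxy]
      · rw [if_neg hxy, if_neg (fun h' => hxy h'.symm)]
    rw [Finset.prod_congr rfl (fun b' _ => factor b')]
    by_cases h : resC d I x = resC d I y
    · rw [if_pos h]
      refine Finset.prod_eq_one fun b' _ => ?_
      rw [if_pos]
      funext i
      exact congrFun h ⟨i.1, hnotI b' i.1 i.2⟩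
    · rw [if_neg h]
      have : ∃ j : {j // j ∉ I}, x j.1 ≠ y j.1 := by
        by_contra hcon
        push_neg at hcon
        exact h (funext fun j => hcon j)
      obtain ⟨j, hj⟩ := this
      obtain ⟨b', hb'⟩ := hc'' j
      refine Finset.prod_eq_zero (Finset.mem_univ b') ?_
      rw [if_neg]
      intro hres
      exact hj (congrFun hres ⟨j.1, Finset.mem_subtype.mp hb'⟩)
  ext a b
  have expand : ∀ u v, (W * σ * Wᴴ) u v
      = ∑ y, ∑ x, W u x * σ x y * (starRingEnd ℂ) (W v y) := by
    intro u v
    rw [Matrix.mul_apply]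
    refine Finset.sum_congr rfl fun y _ => ?_
    rw [Matrix.mul_apply, Matrix.conjTranspose_apply, Finset.sum_mul]
    rfl
  rw [ptr_apply]
  rw [Finset.sum_congr rfl (fun c _ => expand (mrg d I a c) (mrg d I b c))]
  rw [Finset.sum_comm]
  rw [Finset.sum_congr rfl (fun (y : (i : Fin n) → Fin (d i)) _ => Finset.sum_comm)]
  have inner : ∀ y x, (∑ c : (j : {j // j ∉ I}) → Fin (d j.1),
      W (mrg d I a c) x * σ x y * (starRingEnd ℂ) (W (mrg d I b c) y))
      = σ x y * (U I a (res d I x) * (starRingEnd ℂ) (U I b (res d I y)) *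
          (if resC d I x = resC d I y then 1 else 0)) := by
    intro y x
    rw [← key a b x y, Finset.mul_sum]
    exact Finset.sum_congr rfl fun c _ => by ring
  rw [Finset.sum_congr rfl (fun y _ => Finset.sum_congr rfl (fun x _ => inner y x))]
  have hx : ∀ yI yc, (∑ x, σ x (mrg d I yI yc) *
      (U I a (res d I x) * (starRingEnd ℂ) (U I b (res d I (mrg d I yI yc))) *
        (if resC d I x = resC d I (mrg d I yI yc) then 1 else 0)))
      = ∑ xI, ∑ xc, σ (mrg d I xI xc) (mrg d I yI yc) *
          (U I a xI * (starRingEnd ℂ) (U I b yI) * (if xc = yc then 1 else 0)) := by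
    intro yI yc
    rw [sum_merge d I]
    simp only [res_mrg, resC_mrg]
  have hcollapse : ∀ yI yc xI, (∑ xc, σ (mrg d I xI xc) (mrg d I yI yc) *
      (U I a xI * (starRingEnd ℂ) (U I b yI) * (if xc = yc then 1 else 0)))
      = σ (mrg d I xI yc) (mrg d I yI yc) * (U I a xI * (starRingEnd ℂ) (U I b yI)) := by
    intro yI yc xI
    rw [Finset.sum_eq_single yc]
    · simp
    · intro xc _ hne; simp [hne]
    · simp
  have rhs : (U I * ptr d I σ * (U I)ᴴ) a b
      = ∑ yI, ∑ xI, ∑ c, σ (mrg d I xI c) (mrg d I yI c) *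
          (U I a xI * (starRingEnd ℂ) (U I b yI)) := by
    rw [Matrix.mul_apply]
    refine Finset.sum_congr rfl fun yI _ => ?_
    rw [Matrix.mul_apply, Matrix.conjTranspose_apply, Finset.sum_mul]
    refine Finset.sum_congr rfl fun xI _ => ?_
    rw [ptr_apply, Finset.mul_sum, Finset.sum_mul]
    exact Finset.sum_congr rfl fun c _ => by rw [RCLike.star_def]; ring
  rw [rhs, sum_merge d I]
  refine Finset.sum_congr rfl fun yI _ => ?_
  calc ∑ yc, (∑ x, σ x (mrg d I yI yc) *
      (U I a (res d I x) * (starRingEnd ℂ) (U I b (res d I (mrg d I yI yc))) *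
        (if resC d I x = resC d I (mrg d I yI yc) then 1 else 0)))
      = ∑ yc, ∑ xI, σ (mrg d I xI yc) (mrg d I yI yc) *
          (U I a xI * (starRingEnd ℂ) (U I b yI)) :=
        Finset.sum_congr rfl fun yc _ => (hx yI yc).trans
          (Finset.sum_congr rfl fun xI _ => hcollapse yI yc xI)
    _ = ∑ xI, ∑ yc, σ (mrg d I xI yc) (mrg d I yI yc) *
          (U I a xI * (starRingEnd ℂ) (U I b yI)) := Finset.sum_comm

end Stmt16Aux
set_option maxHeartbeats 2000000 in
open Stmt16Aux in
/-- "Dual" problem with a partition: maximizing `∑_{I ∈ 𝒲} f_I(τ_I)` over states with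
spectrum majorized by `p`, for continuous convex unitarily invariant `f_I`, admits an
optimal point that is diagonal in the fixed product (computational) basis. -/
theorem stmt16 {n : ℕ} (d : Fin n → ℕ)
    (𝒲 : Finset (Finset (Fin n)))
    (hdisj : ∀ I ∈ 𝒲, ∀ J ∈ 𝒲, I ≠ J → Disjoint I J)
    (hcover : 𝒲.sup id = Finset.univ)
    (f : (I : Finset (Fin n)) →
      Matrix ((i : {i // i ∈ I}) → Fin (d i.1)) ((i : {i // i ∈ I}) → Fin (d i.1)) ℂ → ℝ)
    (hfc : ∀ I ∈ 𝒲, ContinuousOn (f I) {X | X.PosSemidef ∧ X.trace = 1})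
    (hfconv : ∀ I ∈ 𝒲, ConvexOn ℝ {X | X.PosSemidef ∧ X.trace = 1} (f I))
    (hfu : ∀ I ∈ 𝒲,
      ∀ U ∈ Matrix.unitaryGroup ((i : {i // i ∈ I}) → Fin (d i.1)) ℂ,
      ∀ X : Matrix ((i : {i // i ∈ I}) → Fin (d i.1)) ((i : {i // i ∈ I}) → Fin (d i.1)) ℂ,
        X.PosSemidef → X.trace = 1 → f I (U * X * Uᴴ) = f I X)
    (p : ((i : Fin n) → Fin (d i)) → ℝ) (hp0 : ∀ x, 0 ≤ p x) (hp1 : ∑ x, p x = 1) :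
    ∃ τ : Matrix ((i : Fin n) → Fin (d i)) ((i : Fin n) → Fin (d i)) ℂ,
      ∃ hτ : τ.PosSemidef, τ.trace = 1 ∧ Maj p hτ.1.eigenvalues ∧
        (∀ x y, x ≠ y → τ x y = 0) ∧
        ∀ σ : Matrix ((i : Fin n) → Fin (d i)) ((i : Fin n) → Fin (d i)) ℂ,
          ∀ hσ : σ.PosSemidef, σ.trace = 1 → Maj p hσ.1.eigenvalues →
            ∑ I ∈ 𝒲, f I (ptr d I σ) ≤ ∑ I ∈ 𝒲, f I (ptr d I τ) := by
  classical
  set D : Set (((i : Fin n) → Fin (d i)) → ℝ) :=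
    {q | (∀ x, 0 ≤ q x) ∧ (∑ x, q x = 1) ∧ Maj p q} with hD
  have hDclosed : IsClosed D := by
    have hset : D = (⋂ x, {q : ((i : Fin n) → Fin (d i)) → ℝ | 0 ≤ q x}) ∩
        ({q : ((i : Fin n) → Fin (d i)) → ℝ | ∑ x, q x = 1} ∩
          ((⋂ s : Finset ((i : Fin n) → Fin (d i)),
            ⋃ t : Finset ((i : Fin n) → Fin (d i)), ⋃ _h : t.card = s.card,
              {q : ((i : Fin n) → Fin (d i)) → ℝ | ∑ i ∈ s, q i ≤ ∑ i ∈ t, p i}) ∩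
            {q : ((i : Fin n) → Fin (d i)) → ℝ | ∑ i, p i = ∑ i, q i})) := by
      ext q
      simp only [hD, Maj, Set.mem_inter_iff, Set.mem_iInter, Set.mem_iUnion,
        Set.mem_setOf_eq]
      constructor
      · rintro ⟨h1, h2, hall, hsum⟩
        refine ⟨h1, h2, fun s => ?_, hsum⟩
        obtain ⟨t, ht, hle⟩ := hall s
        exact ⟨t, ht, hle⟩
      · rintro ⟨h1, h2, hall, hsum⟩
        refine ⟨h1, h2, fun s => ?_, hsum⟩
        obtain ⟨t, ht, hle⟩ := hall s
        exact ⟨t, ht, hle⟩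
    rw [hset]
    refine (isClosed_iInter fun x =>
      isClosed_le continuous_const (continuous_apply x)).inter
      ((isClosed_eq (continuous_finset_sum _ fun i _ => continuous_apply i)
        continuous_const).inter (IsClosed.inter ?_
          (isClosed_eq continuous_const
            (continuous_finset_sum _ fun i _ => continuous_apply i))))
    refine isClosed_iInter fun s => ?_
    refine isClosed_iUnion_of_finite fun t => ?_
    refine isClosed_iUnion_of_finite fun _ => ?_
    exact isClosed_le (continuous_finset_sum _ fun i _ => continuous_apply i) continuous_const
  have hDbdd : Bornology.IsBounded D := by
    refine (Metric.isBounded_closedBall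
      (x := (0 : ((i : Fin n) → Fin (d i)) → ℝ)) (r := 1)).subset ?_
    intro q hq
    rw [Metric.mem_closedBall, dist_zero_right]
    rw [pi_norm_le_iff_of_nonneg zero_le_one]
    intro x
    rw [Real.norm_eq_abs, abs_le]
    constructor
    · linarith [hq.1 x]
    · calc q x ≤ ∑ y, q y := Finset.single_le_sum (fun y _ => hq.1 y) (Finset.mem_univ x)
        _ = 1 := hq.2.1
  have hDcomp : IsCompact D := Metric.isCompact_of_isClosed_isBounded hDclosed hDbdd
  have hDne : D.Nonempty := ⟨p, hp0, hp1, maj_refl p⟩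
  -- properties of the diagonal states
  have hdiagPSD : ∀ q ∈ D, (Matrix.diagonal (fun x => ((q x : ℝ) : ℂ))).PosSemidef := by
    intro q hq
    exact Matrix.PosSemidef.diagonal (Pi.le_def.mpr fun x =>
      Complex.zero_le_real.mpr (hq.1 x))
  have hdiagtr : ∀ q ∈ D, (Matrix.diagonal (fun x => ((q x : ℝ) : ℂ))).trace = 1 := by
    intro q hq
    rw [Matrix.trace_diagonal]
    rw [show (∑ x, ((q x : ℝ) : ℂ)) = (((∑ x, q x : ℝ)) : ℂ) by push_cast; rfl]
    rw [hq.2.1]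
    norm_num
  have hmargPSD : ∀ q ∈ D, ∀ I : Finset (Fin n),
      (ptr d I (Matrix.diagonal (fun x => ((q x : ℝ) : ℂ)))).PosSemidef :=
    fun q hq I => ptr_psd d (hdiagPSD q hq)
  have hmargtr : ∀ q ∈ D, ∀ I : Finset (Fin n),
      (ptr d I (Matrix.diagonal (fun x => ((q x : ℝ) : ℂ)))).trace = 1 := by
    intro q hq I
    rw [ptr_trace]
    exact hdiagtr q hq
  -- the objective function
  set g : (((i : Fin n) → Fin (d i)) → ℝ) → ℝ :=
    fun q => ∑ I ∈ 𝒲, f I (ptr d I (Matrix.diagonal (fun x => ((q x : ℝ) : ℂ)))) with hg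
  have hmatcont : ∀ I : Finset (Fin n),
      Continuous (fun q : ((i : Fin n) → Fin (d i)) → ℝ =>
        ptr d I (Matrix.diagonal (fun x => ((q x : ℝ) : ℂ)))) := by
    intro I
    apply continuous_matrix
    intro a b
    have hrw : (fun q : ((i : Fin n) → Fin (d i)) → ℝ =>
        ptr d I (Matrix.diagonal fun x => ((q x : ℝ) : ℂ)) a b)
        = fun q => if a = b then (((∑ c, q (mrg d I a c) : ℝ)) : ℂ) else 0 := by
      funext q
      rw [ptr_diag]
      by_cases h : a = b
      · subst h
        rw [Matrix.diagonal_apply_eq, if_pos rfl]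
        push_cast
        rfl
      · rw [Matrix.diagonal_apply_ne _ h, if_neg h]
    rw [hrw]
    by_cases h : a = b
    · simp only [h, if_pos]
      exact Complex.continuous_ofReal.comp
        (continuous_finset_sum _ fun c _ => continuous_apply _)
    · simp only [h, if_neg, not_false_iff]
      exact continuous_const
  have hgcont : ContinuousOn g D := by
    refine continuousOn_finset_sum _ fun I hI => ?_
    exact (hfc I hI).comp (hmatcont I).continuousOn
      (fun q hq => ⟨hmargPSD q hq I, hmargtr q hq I⟩)
  obtain ⟨q0, hq0D, hq0max⟩ := hDcomp.exists_isMaxOn hDne hgcont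
  -- the optimal diagonal state
  set τ : Matrix ((i : Fin n) → Fin (d i)) ((i : Fin n) → Fin (d i)) ℂ :=
    Matrix.diagonal (fun x => ((q0 x : ℝ) : ℂ)) with hτdef
  have hτPSD : τ.PosSemidef := hdiagPSD q0 hq0D
  refine ⟨τ, hτPSD, hdiagtr q0 hq0D, ?_, ?_, ?_⟩
  · -- Maj p eigenvalues
    have hmaj1 : Maj q0 (fun i => ((Matrix.diagonal
        (RCLike.ofReal ∘ hτPSD.1.eigenvalues) : Matrix _ _ ℂ) i i).re) := by
      apply maj_diag_of_unitary_conj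
        (star (hτPSD.1.eigenvectorUnitary : Matrix _ _ ℂ))
        (Unitary.star_mem hτPSD.1.eigenvectorUnitary.2) q0
      rw [Matrix.star_eq_conjTranspose, Matrix.conjTranspose_conjTranspose,
        ← Matrix.star_eq_conjTranspose]
      have h := hτPSD.1.conjStarAlgAut_star_eigenvectorUnitary
      simp only [Unitary.conjStarAlgAut_apply, star_star, Unitary.coe_star] at h
      exact h.symm
    have heig : (fun i => ((Matrix.diagonal
        (RCLike.ofReal ∘ hτPSD.1.eigenvalues) : Matrix _ _ ℂ) i i).re)
        = hτPSD.1.eigenvalues := by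
      funext i
      rw [Matrix.diagonal_apply_eq]
      simp
    rw [heig] at hmaj1
    exact (hq0D.2.2).trans' hmaj1
  · -- diagonal
    intro x y hxy
    exact Matrix.diagonal_apply_ne _ hxy
  · -- optimality
    intro σ hσ hσtr hσmaj
    have hptrPSD : ∀ J : Finset (Fin n), (ptr d J σ).PosSemidef := fun J => ptr_psd d hσ
    set Ufam : (J : Finset (Fin n)) → Matrix ((i : {i // i ∈ J}) → Fin (d i.1))
        ((i : {i // i ∈ J}) → Fin (d i.1)) ℂ :=
      fun J => star ((hptrPSD J).1.eigenvectorUnitary : Matrix _ _ ℂ) with hUfam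
    have hUmem : ∀ J ∈ 𝒲, Ufam J ∈ Matrix.unitaryGroup _ ℂ :=
      fun J _ => Unitary.star_mem (hptrPSD J).1.eigenvectorUnitary.2
    set W := bigU d 𝒲 Ufam with hWdef
    have hWu : W ∈ Matrix.unitaryGroup _ ℂ := bigU_unitary d hdisj hcover Ufam hUmem
    set σ' := W * σ * Wᴴ with hσ'def
    have hσ'PSD : σ'.PosSemidef := hσ.mul_mul_conjTranspose_same W
    have hσ'tr : σ'.trace = 1 := by
      rw [hσ'def, Matrix.trace_mul_cycle, ← Matrix.star_eq_conjTranspose,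
        Matrix.mem_unitaryGroup_iff'.mp hWu, one_mul, hσtr]
    set q : ((i : Fin n) → Fin (d i)) → ℝ := fun x => (σ' x x).re with hqdef
    have hdiagreal : ∀ x, σ' x x = ((q x : ℝ) : ℂ) := by
      intro x
      have h0 : 0 ≤ σ' x x := by
        exact hσ'PSD.diag_nonneg
      have him := (Complex.le_def.mp h0).2
      apply Complex.ext <;> simp [hqdef, ← him]
    have hq0' : ∀ x, 0 ≤ q x := by
      intro x
      have h0 : 0 ≤ σ' x x := by
        exact hσ'PSD.diag_nonneg
      exact (Complex.le_def.mp h0).1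
    have hq1' : ∑ x, q x = 1 := by
      have : (σ'.trace).re = ∑ x, (σ' x x).re := Complex.re_sum Finset.univ _
      rw [hqdef]
      simp only [← this, hσ'tr]
      norm_num
    have hqmaj : Maj p q := by
      have hdreq : Matrix.diagonal (RCLike.ofReal ∘ hσ.1.eigenvalues) =
          Matrix.diagonal (fun i => ((hσ.1.eigenvalues i : ℝ) : ℂ)) := by
        congr 1
      have hconj : σ' = (W * (hσ.1.eigenvectorUnitary :
            Matrix ((i : Fin n) → Fin (d i)) ((i : Fin n) → Fin (d i)) ℂ)) *
          Matrix.diagonal (fun i => ((hσ.1.eigenvalues i : ℝ) : ℂ)) *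
          (W * (hσ.1.eigenvectorUnitary :
            Matrix ((i : Fin n) → Fin (d i)) ((i : Fin n) → Fin (d i)) ℂ))ᴴ := by
        rw [hσ'def]
        conv_lhs => rw [hσ.1.spectral_theorem, Unitary.conjStarAlgAut_apply, hdreq]
        rw [Matrix.conjTranspose_mul, Matrix.star_eq_conjTranspose]
        simp only [mul_assoc]
      have hmaj2 := maj_diag_of_unitary_conj
        (W * (hσ.1.eigenvectorUnitary :
          Matrix ((i : Fin n) → Fin (d i)) ((i : Fin n) → Fin (d i)) ℂ))
        (mul_mem hWu hσ.1.eigenvectorUnitary.2) hσ.1.eigenvalues σ' hconj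
      exact hσmaj.trans' hmaj2
    have hqD : q ∈ D := ⟨hq0', hq1', hqmaj⟩
    have hobj : ∀ I ∈ 𝒲, f I (ptr d I σ)
        = f I (ptr d I (Matrix.diagonal (fun x => ((q x : ℝ) : ℂ)))) := by
      intro I hI
      have hconjI : ptr d I σ' = Ufam I * ptr d I σ * (Ufam I)ᴴ :=
        ptr_conj d hdisj hcover hI Ufam hUmem σ
      have hdiagI : Ufam I * ptr d I σ * (Ufam I)ᴴ
          = Matrix.diagonal (RCLike.ofReal ∘ (hptrPSD I).1.eigenvalues) := by
        simp only [hUfam]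
        rw [Matrix.star_eq_conjTranspose, Matrix.conjTranspose_conjTranspose,
          ← Matrix.star_eq_conjTranspose]
        have h := (hptrPSD I).1.conjStarAlgAut_star_eigenvectorUnitary
        simp only [Unitary.conjStarAlgAut_apply, star_star, Unitary.coe_star] at h
        exact h
      have hfeq1 : f I (ptr d I σ') = f I (ptr d I σ) := by
        rw [hconjI]
        exact hfu I hI (Ufam I) (hUmem I hI) (ptr d I σ) (hptrPSD I)
          (by rw [ptr_trace]; exact hσtr)
      have hmargq : ptr d I (Matrix.diagonal (fun x => ((q x : ℝ) : ℂ))) = ptr d I σ' := by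
        have hentry : ∀ a, (∑ c, ((q (mrg d I a c) : ℝ) : ℂ))
            = (RCLike.ofReal ∘ (hptrPSD I).1.eigenvalues) a := by
          intro a
          have h1 : (∑ c, ((q (mrg d I a c) : ℝ) : ℂ)) = ptr d I σ' a a := by
            rw [ptr_apply]
            exact Finset.sum_congr rfl fun c _ => (hdiagreal _).symm
          rw [h1, hconjI, hdiagI]
          exact Matrix.diagonal_apply_eq _ a
        rw [hconjI, hdiagI, ptr_diag]
        exact congrArg Matrix.diagonal (funext hentry)
      rw [hmargq, hfeq1]
    calc ∑ I ∈ 𝒲, f I (ptr d I σ)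
        = g q := Finset.sum_congr rfl (fun I hI => hobj I hI)
      _ ≤ g q0 := hq0max hqD
      _ = ∑ I ∈ 𝒲, f I (ptr d I τ) := rfl
end
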